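/- arXiv:1304.3355 — 4 statements merged into one kernel-verified Lean document; each statement's English description precedes it below -/
import Mathlib

section
/- Let C ≥ 0. For every ε > 0 there exist A ≥ 1 and M ∈ [0, A/2] with the following property: for every a ≥ A and every function u, continuous on the closure of Ω_a and twice continuously differentiable in Ω_a, such that u = 0 on the boundary of Ω_a, 0 ≤ u ≤ 1 on Ω_a \ ((−C,C)×(−1,1)), and Δu + 1 = 0 in Ω_a \ ([−C,C]×[−1,1]), one has |u(x,y) − (1−y²)/2| ≤ ε for every (x,y) in the closure of Ω_a belonging to ([−a+M,−M] ∪ [M,a−M]) × [−1,1]. -/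
open Set Metric MeasureTheory

open Filter Topology

/-- The stadium-like convex domain `Ω_a`. -/
def stadium (φ : ℝ → ℝ) (a : ℝ) : Set (ℝ × ℝ) :=
  {p : ℝ × ℝ | -a - φ p.2 < p.1 ∧ p.1 < a + φ p.2 ∧ -1 < p.2 ∧ p.2 < 1}

/-- The Laplacian of a function on `ℝ × ℝ`: sum of the two second partial derivatives. -/
noncomputable def lap2 (u : ℝ × ℝ → ℝ) (p : ℝ × ℝ) : ℝ :=
  deriv (fun t => deriv (fun s => u (s, p.2)) t) p.1 +
  deriv (fun t => deriv (fun s => u (p.1, s)) t) p.2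

lemma d2_nonpos_of_isLocalMax {f : ℝ → ℝ} {t : ℝ}
    (hd : ∀ᶠ s in 𝓝 t, DifferentiableAt ℝ f s) (hmax : IsLocalMax f t) :
    deriv (deriv f) t ≤ 0 := by
  by_contra hpos
  push_neg at hpos
  have hdiff : DifferentiableAt ℝ (deriv f) t := by
    by_contra h
    rw [deriv_zero_of_not_differentiableAt h] at hpos
    exact lt_irrefl 0 hpos
  have hg : HasDerivAt (deriv f) (deriv (deriv f) t) t := hdiff.hasDerivAt
  have hg0 : deriv f t = 0 := hmax.deriv_eq_zero
  have hslope : Tendsto (slope (deriv f) t) (𝓝[>] t) (𝓝 (deriv (deriv f) t)) :=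
    (hasDerivAt_iff_tendsto_slope.1 hg).mono_left
      (nhdsWithin_mono _ fun s hs => ne_of_gt hs)
  have hev : ∀ᶠ s in 𝓝[>] t, 0 < deriv f s := by
    filter_upwards [hslope.eventually (eventually_gt_nhds hpos),
      self_mem_nhdsWithin] with s hs hs'
    have h0 : 0 < slope (deriv f) t s := hs
    rw [slope_def_field] at h0
    have h1 : 0 < s - t := sub_pos.2 hs'
    rw [div_pos_iff] at h0
    rcases h0 with ⟨h2, _⟩ | ⟨_, h3⟩
    · rw [hg0, sub_zero] at h2; exact h2
    · linarith
  -- get an interval (t, c) on which deriv f > 0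
  obtain ⟨c, hc, hc'⟩ : ∃ c, t < c ∧ Ioo t c ⊆ {s | 0 < deriv f s} := by
    rcases (nhdsGT_basis t).eventually_iff.1 hev with ⟨c, hc1, hc2⟩
    exact ⟨c, hc1, hc2⟩
  obtain ⟨δ, hδ, hδ'⟩ := Metric.eventually_nhds_iff_ball.1 hd
  obtain ⟨δ₂, hδ₂, hδ₂'⟩ := Metric.eventually_nhds_iff_ball.1 hmax
  set c' := min c (t + min δ δ₂ / 2) with hc'def
  have htc' : t < c' := by
    apply lt_min hc
    have : 0 < min δ δ₂ := lt_min hδ hδ₂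
    linarith
  have hsub : Icc t c' ⊆ Metric.ball t δ := by
    intro s hs
    rw [Metric.mem_ball, Real.dist_eq, abs_lt]
    have h1 : s ≤ c' := hs.2
    have h2 : c' ≤ t + min δ δ₂ / 2 := min_le_right _ _
    have h3 : min δ δ₂ ≤ δ := min_le_left _ _
    have h4 : t ≤ s := hs.1
    constructor <;> nlinarith [lt_min hδ hδ₂]
  have hmono : StrictMonoOn f (Icc t c') := by
    apply strictMonoOn_of_deriv_pos (convex_Icc _ _)
    · exact fun s hs => (hδ' s (hsub hs)).continuousAt.continuousWithinAt
    · intro s hs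
      rw [interior_Icc] at hs
      exact hc' ⟨hs.1, lt_of_lt_of_le hs.2 (min_le_left _ _)⟩
  have hlt : f t < f c' := hmono (left_mem_Icc.2 htc'.le) (right_mem_Icc.2 htc'.le) htc'
  have hle : f c' ≤ f t := by
    apply hδ₂' c'
    rw [Metric.mem_ball, Real.dist_eq, abs_lt]
    have h2 : c' ≤ t + min δ δ₂ / 2 := min_le_right _ _
    have h3 : min δ δ₂ ≤ δ₂ := min_le_right _ _
    constructor <;> nlinarith [lt_min hδ hδ₂]
  linarith

lemma d2_add {f g : ℝ → ℝ} {t : ℝ}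
    (hf : ∀ᶠ s in 𝓝 t, DifferentiableAt ℝ f s)
    (hg : ∀ᶠ s in 𝓝 t, DifferentiableAt ℝ g s)
    (hf' : DifferentiableAt ℝ (deriv f) t)
    (hg' : DifferentiableAt ℝ (deriv g) t) :
    deriv (deriv (fun s => f s + g s)) t = deriv (deriv f) t + deriv (deriv g) t := by
  have h1 : deriv (fun s => f s + g s) =ᶠ[𝓝 t] fun s => deriv f s + deriv g s := by
    filter_upwards [hf, hg] with s hfs hgs
    exact deriv_add hfs hgs
  rw [h1.deriv_eq]
  exact deriv_add hf' hg'

lemma d2_neg (f : ℝ → ℝ) (t : ℝ) :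
    deriv (deriv (fun s => -f s)) t = -deriv (deriv f) t := by
  have : deriv (fun s => -f s) = fun s => -deriv f s := funext fun s => deriv.neg
  rw [this, deriv.fun_neg]

lemma slice_facts_x {u : ℝ × ℝ → ℝ} {U : Set (ℝ × ℝ)} (hU : IsOpen U)
    (hu : ContDiffOn ℝ 2 u U) {p : ℝ × ℝ} (hp : p ∈ U) :
    (∀ᶠ s in 𝓝 p.1, DifferentiableAt ℝ (fun s => u (s, p.2)) s) ∧
      DifferentiableAt ℝ (deriv (fun s => u (s, p.2))) p.1 := by
  set V : Set ℝ := {s : ℝ | (s, p.2) ∈ U} with hVdef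
  have hV : IsOpen V := hU.preimage (by continuity)
  have hpV : p.1 ∈ V := hp
  have hcomp : ContDiffOn ℝ 2 (fun s => u (s, p.2)) V := by
    exact hu.comp ((contDiff_id.prodMk contDiff_const).contDiffOn :
      ContDiffOn ℝ 2 (fun s : ℝ => (s, p.2)) V) (fun s hs => hs)
  have h21 : ((2 : ℕ) : WithTop ℕ∞) = 1 + 1 := by norm_num
  have hsplit := (contDiffOn_succ_iff_deriv_of_isOpen (n := 1) hV).1 (by
    rw [← h21]; exact_mod_cast hcomp)
  constructor
  · filter_upwards [hV.mem_nhds hpV] with s hs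
    exact (hsplit.1 s hs).differentiableAt (hV.mem_nhds hs)
  · exact ((hsplit.2.2.differentiableOn one_ne_zero) p.1 hpV).differentiableAt
      (hV.mem_nhds hpV)

lemma slice_facts_y {u : ℝ × ℝ → ℝ} {U : Set (ℝ × ℝ)} (hU : IsOpen U)
    (hu : ContDiffOn ℝ 2 u U) {p : ℝ × ℝ} (hp : p ∈ U) :
    (∀ᶠ s in 𝓝 p.2, DifferentiableAt ℝ (fun s => u (p.1, s)) s) ∧
      DifferentiableAt ℝ (deriv (fun s => u (p.1, s))) p.2 := by
  set V : Set ℝ := {s : ℝ | (p.1, s) ∈ U} with hVdef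
  have hV : IsOpen V := hU.preimage (by continuity)
  have hpV : p.2 ∈ V := hp
  have hcomp : ContDiffOn ℝ 2 (fun s => u (p.1, s)) V := by
    exact hu.comp ((contDiff_const.prodMk contDiff_id).contDiffOn :
      ContDiffOn ℝ 2 (fun s : ℝ => (p.1, s)) V) (fun s hs => hs)
  have h21 : ((2 : ℕ) : WithTop ℕ∞) = 1 + 1 := by norm_num
  have hsplit := (contDiffOn_succ_iff_deriv_of_isOpen (n := 1) hV).1 (by
    rw [← h21]; exact_mod_cast hcomp)
  constructor
  · filter_upwards [hV.mem_nhds hpV] with s hs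
    exact (hsplit.1 s hs).differentiableAt (hV.mem_nhds hs)
  · exact ((hsplit.2.2.differentiableOn one_ne_zero) p.2 hpV).differentiableAt
      (hV.mem_nhds hpV)

set_option maxHeartbeats 1000000 in
/-- Weak maximum principle on a bounded open subset of `ℝ²`. -/
lemma max_principle {U : Set (ℝ × ℝ)} (hU : IsOpen U) (hb : Bornology.IsBounded U)
    {h : ℝ × ℝ → ℝ} (hc : ContinuousOn h (closure U))
    (hx : ∀ p ∈ U, ∀ᶠ s in 𝓝 p.1, DifferentiableAt ℝ (fun s => h (s, p.2)) s)
    (hx' : ∀ p ∈ U, DifferentiableAt ℝ (deriv (fun s => h (s, p.2))) p.1)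
    (hy : ∀ p ∈ U, ∀ᶠ s in 𝓝 p.2, DifferentiableAt ℝ (fun s => h (p.1, s)) s)
    (hlap : ∀ p ∈ U, 0 ≤ lap2 h p)
    (hfr : ∀ p ∈ frontier U, h p ≤ 0) :
    ∀ p ∈ closure U, h p ≤ 0 := by
  obtain ⟨R, hR0, hR⟩ : ∃ R : ℝ, 0 ≤ R ∧ ∀ p ∈ closure U, p.1 ^ 2 ≤ R := by
    obtain ⟨r, hr⟩ := (Metric.isBounded_iff_subset_closedBall 0).1 hb.closure
    refine ⟨max r 0 ^ 2, by positivity, fun p hp => ?_⟩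
    have h1 : dist p (0 : ℝ × ℝ) ≤ r := hr hp
    have h2 : |p.1| ≤ dist p 0 := by
      rw [Prod.dist_eq]
      have : dist p.1 (0:ℝ×ℝ).1 ≤ max (dist p.1 (0:ℝ×ℝ).1) (dist p.2 (0:ℝ×ℝ).2) :=
        le_max_left _ _
      simpa [Real.dist_eq] using this
    have : |p.1| ≤ max r 0 := le_trans h2 (le_trans h1 (le_max_left _ _))
    calc p.1 ^ 2 = |p.1| ^ 2 := (sq_abs _).symm
      _ ≤ max r 0 ^ 2 := by nlinarith [abs_nonneg p.1]
  -- key step : for every δ > 0, h p ≤ δ * R on closure U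
  have key : ∀ δ > (0:ℝ), ∀ p ∈ closure U, h p + δ * (p.1 ^ 2 - R) ≤ 0 := by
    intro δ hδ
    rcases eq_empty_or_nonempty U with rfl | hne
    · simp
    set H : ℝ × ℝ → ℝ := fun p => h p + δ * (p.1 ^ 2 - R) with hH
    have hHc : ContinuousOn H (closure U) := by
      apply hc.add (Continuous.continuousOn (by continuity))
    obtain ⟨p₀, hp₀m, hp₀⟩ := hb.isCompact_closure.exists_isMaxOn
      hne.closure hHc
    have hmaxle : ∀ q ∈ closure U, H q ≤ H p₀ := fun q hq => hp₀ hq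
    by_cases hp₀U : p₀ ∈ U
    · -- interior maximum: contradiction with the Laplacian
      exfalso
      have hnhd : ∀ᶠ q in 𝓝 p₀, q ∈ U := hU.mem_nhds hp₀U
      -- x-slice local max
      have hmx : IsLocalMax (fun s => H (s, p₀.2)) p₀.1 := by
        have hcont : Continuous fun s : ℝ => ((s, p₀.2) : ℝ × ℝ) := by continuity
        filter_upwards [hcont.continuousAt.preimage_mem_nhds
          (by simpa using hnhd)] with s hs
        exact hmaxle _ (subset_closure hs)
      have hmy : IsLocalMax (fun s => H (p₀.1, s)) p₀.2 := by
        have hcont : Continuous fun s : ℝ => ((p₀.1, s) : ℝ × ℝ) := by continuity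
        filter_upwards [hcont.continuousAt.preimage_mem_nhds
          (by simpa using hnhd)] with s hs
        exact hmaxle _ (subset_closure hs)
      -- second derivatives of the slices of H
      have hxev := hx p₀ hp₀U
      have hyev := hy p₀ hp₀U
      have hquad : ∀ᶠ s in 𝓝 p₀.1, DifferentiableAt ℝ (fun s : ℝ => δ * (s ^ 2 - R)) s :=
        Eventually.of_forall (fun s => by fun_prop)
      have hquadderiv : deriv (fun s : ℝ => δ * (s ^ 2 - R)) = fun s => δ * (2 * s) := by
        funext s
        have hq : HasDerivAt (fun s : ℝ => δ * (s ^ 2 - R)) (δ * (2 * s)) s := by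
          simpa using ((hasDerivAt_pow 2 s).sub_const R).const_mul δ
        exact hq.deriv
      have hquadderiv2 : deriv (fun s : ℝ => δ * (2 * s)) p₀.1 = 2 * δ := by
        have hq : HasDerivAt (fun s : ℝ => δ * (2 * s)) (2 * δ) p₀.1 := by
          have := ((hasDerivAt_id p₀.1).const_mul 2).const_mul δ
          simpa [mul_comm, mul_assoc] using this.congr_deriv (by ring)
        exact hq.deriv
      have hHx : deriv (deriv (fun s => H (s, p₀.2))) p₀.1
          = deriv (deriv (fun s => h (s, p₀.2))) p₀.1 + 2 * δ := by
        have e1 : (fun s => H (s, p₀.2))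
            = fun s => h (s, p₀.2) + δ * (s ^ 2 - R) := rfl
        rw [e1, d2_add hxev hquad (hx' p₀ hp₀U) (by rw [hquadderiv]; fun_prop)]
        rw [hquadderiv, hquadderiv2]
      have hHy : deriv (deriv (fun s => H (p₀.1, s))) p₀.2
          = deriv (deriv (fun s => h (p₀.1, s))) p₀.2 := by
        have e1 : (fun s => H (p₀.1, s))
            = fun s => h (p₀.1, s) + δ * (p₀.1 ^ 2 - R) := rfl
        have e2 : deriv (fun s => h (p₀.1, s) + δ * (p₀.1 ^ 2 - R))
            = deriv (fun s => h (p₀.1, s)) := by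
          funext s; exact deriv_add_const _
        rw [e1, e2]
      have hx2 := d2_nonpos_of_isLocalMax (f := fun s => H (s, p₀.2)) ?_ hmx
      · have hy2 := d2_nonpos_of_isLocalMax (f := fun s => H (p₀.1, s)) ?_ hmy
        · have hl := hlap p₀ hp₀U
          have hl' : 0 ≤ deriv (deriv fun s => h (s, p₀.2)) p₀.1
              + deriv (deriv fun s => h (p₀.1, s)) p₀.2 := hl
          rw [hHx] at hx2
          rw [hHy] at hy2
          linarith
        · filter_upwards [hyev] with s hs
          exact show DifferentiableAt ℝ
            (fun s => h (p₀.1, s) + δ * (p₀.1 ^ 2 - R)) s from hs.add_const _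
      · filter_upwards [hxev, hquad] with s h1 h2
        exact h1.add h2
    · have hp₀f : p₀ ∈ frontier U := by
        rw [hU.frontier_eq]; exact ⟨hp₀m, hp₀U⟩
      intro p hp
      have h1 : H p ≤ H p₀ := hmaxle p hp
      have h2 : H p₀ ≤ 0 := by
        have := hfr p₀ hp₀f
        have h3 : p₀.1 ^ 2 ≤ R := hR p₀ hp₀m
        simp only [hH]
        nlinarith
      have h1' : h p + δ * (p.1 ^ 2 - R) ≤ H p₀ := h1
      linarith
  intro p hp
  have hK0 : 0 ≤ R - p.1 ^ 2 := by have := hR p hp; linarith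
  by_contra hcon
  push_neg at hcon
  have hkey := key (h p / (R - p.1 ^ 2 + 1)) (by positivity) p hp
  have e : h p + h p / (R - p.1 ^ 2 + 1) * (p.1 ^ 2 - R)
      = h p * (1 - (R - p.1 ^ 2) / (R - p.1 ^ 2 + 1)) := by
    field_simp
    ring
  rw [e] at hkey
  have hfrac : (R - p.1 ^ 2) / (R - p.1 ^ 2 + 1) < 1 := by
    rw [div_lt_one (by linarith)]; linarith
  nlinarith

lemma stadium_isOpen {φ : ℝ → ℝ} (hφc : Continuous φ) (a : ℝ) : IsOpen (stadium φ a) := by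
  unfold stadium
  apply IsOpen.inter
  · exact isOpen_lt (by fun_prop) continuous_fst
  apply IsOpen.inter
  · exact isOpen_lt continuous_fst (by fun_prop)
  exact (isOpen_lt continuous_const continuous_snd).inter
    (isOpen_lt continuous_snd continuous_const)

lemma stadium_closure_subset {φ : ℝ → ℝ} (hφc : Continuous φ) (a : ℝ) :
    closure (stadium φ a) ⊆
      {p : ℝ × ℝ | (-1 ≤ p.2 ∧ p.2 ≤ 1) ∧ -a - φ p.2 ≤ p.1 ∧ p.1 ≤ a + φ p.2} := by
  apply closure_minimal
  · rintro p ⟨h1, h2, h3, h4⟩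
    exact ⟨⟨h3.le, h4.le⟩, h1.le, h2.le⟩
  refine IsClosed.inter (IsClosed.inter ?_ ?_) (IsClosed.inter ?_ ?_)
  · exact isClosed_le continuous_const continuous_snd
  · exact isClosed_le continuous_snd continuous_const
  · exact isClosed_le (by fun_prop) continuous_fst
  · exact isClosed_le continuous_fst (by fun_prop)







lemma d2_of_hasDerivAt {f f' : ℝ → ℝ} {t : ℝ} {c : ℝ}
    (h1 : ∀ s, HasDerivAt f (f' s) s) (h2 : HasDerivAt f' c t) :
    deriv (deriv f) t = c := by
  have : deriv f = f' := funext fun s => (h1 s).deriv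
  rw [this, h2.deriv]

set_option maxHeartbeats 2000000 in
lemma key_right (φ : ℝ → ℝ) (hφc : Continuous φ) (hφ0 : ∀ y, 0 ≤ φ y)
    (B : ℝ) (hφB : ∀ y, φ y ≤ B)
    (C a M : ℝ) (hC : 0 ≤ C) (hM : C + 1 ≤ M) (ha : 2 * M ≤ a)
    (u : ℝ × ℝ → ℝ)
    (huc : ContinuousOn u (closure (stadium φ a)))
    (hud : ContDiffOn ℝ 2 u (stadium φ a))
    (hub : ∀ p ∈ frontier (stadium φ a), u p = 0)
    (hu01 : ∀ p ∈ stadium φ a \ (Set.Ioo (-C) C ×ˢ Set.Ioo (-1:ℝ) 1), u p ∈ Set.Icc (0:ℝ) 1)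
    (hulap : ∀ p ∈ stadium φ a \ (Set.Icc (-C) C ×ˢ Set.Icc (-1:ℝ) 1), lap2 u p + 1 = 0) :
    ∀ p ∈ closure (stadium φ a), p.1 ∈ Set.Icc M (a - M) →
      |u p - (1 - p.2 ^ 2) / 2| ≤
        (Real.cos 1)⁻¹ * (Real.exp (C - p.1) + Real.exp (p.1 - a)) := by
  have hπ : (3:ℝ) < Real.pi := Real.pi_gt_three
  have hcos1 : 0 < Real.cos 1 := by
    apply Real.cos_pos_of_mem_Ioo
    constructor <;> linarith
  set K : ℝ := (Real.cos 1)⁻¹ with hKdef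
  have hK0 : 0 < K := by positivity
  have hK1 : Real.cos 1 * K = 1 := by rw [hKdef]; exact mul_inv_cancel₀ (ne_of_gt hcos1)
  have hcosy : ∀ y : ℝ, y ∈ Icc (-1:ℝ) 1 → Real.cos 1 ≤ Real.cos y := by
    intro y hy
    rw [← Real.cos_abs y]
    apply Real.cos_le_cos_of_nonneg_of_le_pi (abs_nonneg y) (by linarith)
    rw [abs_le]; exact ⟨hy.1, hy.2⟩
  have hB : 0 ≤ B := le_trans (hφ0 0) (hφB 0)
  have haM : C + 1 ≤ a - M := by linarith
  set Ω : Set (ℝ × ℝ) := stadium φ a with hΩdef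
  have hΩopen : IsOpen Ω := stadium_isOpen hφc a
  have hclos := stadium_closure_subset hφc a
  set U : Set (ℝ × ℝ) := Ω ∩ {p | C < p.1} with hUdef
  have hUopen : IsOpen U := hΩopen.inter (isOpen_lt continuous_const continuous_fst)
  have hUΩ : U ⊆ Ω := inter_subset_left
  have hUbd : Bornology.IsBounded U := by
    apply Bornology.IsBounded.subset (Metric.isBounded_Icc (-(a+B)) (a+B) |>.prod
      (Metric.isBounded_Icc (-1) 1))
    intro p hp
    obtain ⟨⟨h1, h2, h3, h4⟩, -⟩ := hp
    have h5 := hφ0 p.2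
    have h6 := hφB p.2
    rw [Set.mem_prod, Set.mem_Icc, Set.mem_Icc]
    refine ⟨⟨?_, ?_⟩, ?_, ?_⟩ <;> linarith
  -- the barrier function
  set E : ℝ → ℝ := fun s => K * (Real.exp (C - s) + Real.exp (s - a)) with hEdef
  have hEcont : Continuous E := by rw [hEdef]; fun_prop
  have hEpos : ∀ s, 0 < E s := fun s => by rw [hEdef]; positivity
  set E' : ℝ → ℝ := fun s => K * (-Real.exp (C - s) + Real.exp (s - a)) with hE'def
  have he1 : ∀ s : ℝ, HasDerivAt (fun s => Real.exp (C - s)) (-Real.exp (C - s)) s := by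
    intro s
    simpa using ((hasDerivAt_id s).const_sub C).exp
  have he2 : ∀ s : ℝ, HasDerivAt (fun s => Real.exp (s - a)) (Real.exp (s - a)) s := by
    intro s
    simpa using ((hasDerivAt_id s).sub_const a).exp
  have hE : ∀ s, HasDerivAt E (E' s) s := by
    intro s
    rw [hEdef, hE'def]
    exact ((he1 s).add (he2 s)).const_mul K
  have hE' : ∀ s, HasDerivAt E' (E s) s := by
    intro s
    rw [hEdef, hE'def]
    exact (((he1 s).neg.add (he2 s)).const_mul K).congr_deriv (by ring)
  have hE'cont : Continuous E' := by rw [hE'def]; fun_prop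
  -- the two comparison functions
  set h₁ : ℝ × ℝ → ℝ :=
    fun q => u q + (-((1 - q.2 ^ 2) / 2) + -(E q.1 * Real.cos q.2)) with hh₁def
  set h₂ : ℝ × ℝ → ℝ :=
    fun q => -u q + ((1 - q.2 ^ 2) / 2 + -(E q.1 * Real.cos q.2)) with hh₂def
  -- frontier bound
  have hEw : ∀ q : ℝ × ℝ, q.2 ∈ Icc (-1:ℝ) 1 → 0 < E q.1 * Real.cos q.2 := by
    intro q hq
    exact mul_pos (hEpos q.1) (lt_of_lt_of_le hcos1 (hcosy q.2 hq))
  have hfrbound : ∀ q ∈ frontier U, |u q - (1 - q.2 ^ 2) / 2| ≤ E q.1 * Real.cos q.2 := by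
    intro q hq
    have hclsub : closure {p : ℝ × ℝ | C < p.1} ⊆ {p : ℝ × ℝ | C ≤ p.1} := by
      have hcl : IsClosed {p : ℝ × ℝ | C ≤ p.1} :=
        isClosed_le continuous_const continuous_fst
      exact closure_minimal (fun p hp => show C ≤ p.1 from le_of_lt hp) hcl
    have hq' := frontier_inter_subset Ω {p : ℝ × ℝ | C < p.1} hq
    have hqS : (-1 ≤ q.2 ∧ q.2 ≤ 1) ∧ -a - φ q.2 ≤ q.1 ∧ q.1 ≤ a + φ q.2 := by
      apply hclos
      rcases hq' with ⟨h1, -⟩ | ⟨h1, -⟩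
      · exact frontier_subset_closure h1
      · exact h1
    have hφq := hφ0 q.2
    have hcq : Real.cos 1 ≤ Real.cos q.2 := hcosy q.2 ⟨hqS.1.1, hqS.1.2⟩
    have hwq : 0 < E q.1 * Real.cos q.2 := hEw q ⟨hqS.1.1, hqS.1.2⟩
    have hgq : 0 ≤ (1 - q.2 ^ 2) / 2 ∧ (1 - q.2 ^ 2) / 2 ≤ 1 / 2 := by
      constructor <;> nlinarith [hqS.1.1, hqS.1.2]
    -- the case where q is on the frontier of Ω and q.2 is in the open interval
    have hside : q ∈ frontier Ω → -1 < q.2 → q.2 < 1 → q.1 = a + φ q.2 := by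
      intro hf hy1 hy2
      have hqnot : q ∉ Ω := by
        rw [hΩopen.frontier_eq] at hf
        exact hf.2
      have hCq : C ≤ q.1 := by
        rcases hq' with ⟨-, h2⟩ | ⟨-, h2⟩
        · exact hclsub h2
        · exact hclsub (frontier_subset_closure h2)
      by_contra hne
      apply hqnot
      refine ⟨by linarith, lt_of_le_of_ne hqS.2.2 hne, hy1, hy2⟩
    -- main case split
    by_cases hyext : q.2 = 1 ∨ q.2 = -1
    · -- extreme ordinate : q is on the frontier of Ω, u q = 0 and the parabola vanishes
      have hqf : q ∈ frontier Ω := by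
        have hqnot : q ∉ Ω := by
          intro hqΩ
          obtain ⟨-, -, hz1, hz2⟩ := hqΩ
          rcases hyext with h | h
          · rw [h] at hz2; exact lt_irrefl _ hz2
          · rw [h] at hz1; exact lt_irrefl _ hz1
        rcases hq' with ⟨h1, -⟩ | ⟨h1, -⟩
        · exact h1
        · rw [hΩopen.frontier_eq]
          exact ⟨h1, hqnot⟩
      have hu0 : u q = 0 := hub q hqf
      have hg0 : (1 - q.2 ^ 2) / 2 = 0 := by
        rcases hyext with h | h <;> rw [h] <;> norm_num
      rw [hu0, hg0, sub_zero, abs_zero]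
      exact hwq.le
    · push_neg at hyext
      have hy1 : -1 < q.2 := lt_of_le_of_ne hqS.1.1 (Ne.symm hyext.2)
      have hy2 : q.2 < 1 := lt_of_le_of_ne hqS.1.2 hyext.1
      rcases hq' with ⟨h1, -⟩ | ⟨h1, h2⟩
      · -- q on the lateral frontier of Ω
        have hqside := hside h1 hy1 hy2
        have hu0 : u q = 0 := hub q h1
        rw [hu0, zero_sub, abs_neg, abs_of_nonneg hgq.1]
        -- E q.1 ≥ K * exp (φ q.2) ≥ K, so w ≥ K cos 1 = 1 ≥ 1/2
        have hE1 : K * Real.exp (q.1 - a) ≤ E q.1 := by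
          have e : E q.1 = K * (Real.exp (C - q.1) + Real.exp (q.1 - a)) := rfl
          rw [e]
          have := Real.exp_pos (C - q.1)
          nlinarith
        have hE2 : K ≤ K * Real.exp (q.1 - a) := by
          have : (1:ℝ) ≤ Real.exp (q.1 - a) := by
            rw [hqside]
            have : (0:ℝ) ≤ a + φ q.2 - a := by linarith
            calc (1:ℝ) = Real.exp 0 := by rw [Real.exp_zero]
              _ ≤ Real.exp (a + φ q.2 - a) := Real.exp_le_exp.2 this
          nlinarith
        have hw1 : 1 ≤ E q.1 * Real.cos q.2 := by
          calc (1:ℝ) = Real.cos 1 * K := hK1.symm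
            _ ≤ Real.cos q.2 * E q.1 := by
                exact mul_le_mul hcq (le_trans hE2 hE1) hK0.le (le_trans hcos1.le hcq)
            _ = E q.1 * Real.cos q.2 := mul_comm _ _
        linarith [hgq.2]
      · -- q on the segment x = C
        have hqC : q.1 = C := by
          have h3 : q ∈ closure {p : ℝ × ℝ | C < p.1} := frontier_subset_closure h2
          have h4 : C ≤ q.1 := hclsub h3
          have h5 : q ∉ {p : ℝ × ℝ | C < p.1} := by
            rw [(isOpen_lt continuous_const continuous_fst).frontier_eq] at h2
            exact h2.2
          have h6 : ¬ C < q.1 := h5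
          linarith
        have hqΩ : q ∈ Ω := by
          refine ⟨by rw [hqC]; linarith, by rw [hqC]; linarith, hy1, hy2⟩
        have hu01q : u q ∈ Icc (0:ℝ) 1 := by
          apply hu01
          refine ⟨hqΩ, ?_⟩
          rintro ⟨hqa, -⟩
          rw [hqC] at hqa
          exact absurd hqa.2 (lt_irrefl C)
        have hw1 : 1 ≤ E q.1 * Real.cos q.2 := by
          have hE1 : K ≤ E q.1 := by
            have e : E q.1 = K * (Real.exp (C - q.1) + Real.exp (q.1 - a)) := rfl
            rw [e, hqC, sub_self, Real.exp_zero]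
            have h7 := Real.exp_pos (q.1 - a)
            rw [hqC] at h7
            nlinarith
          calc (1:ℝ) = Real.cos 1 * K := hK1.symm
            _ ≤ Real.cos q.2 * E q.1 :=
                mul_le_mul hcq hE1 hK0.le (le_trans hcos1.le hcq)
            _ = E q.1 * Real.cos q.2 := mul_comm _ _
        rw [abs_le]
        constructor
        · linarith [hu01q.1, hgq.2]
        · linarith [hu01q.2, hgq.1]
  -- Laplacian of u equals -1 on U
  have hlapU : ∀ p ∈ U, lap2 u p = -1 := by
    intro p hp
    have hnot : p ∉ Set.Icc (-C) C ×ˢ Set.Icc (-1:ℝ) 1 := by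
      rintro ⟨h1, -⟩
      exact absurd hp.2 (not_lt.2 h1.2)
    have := hulap p ⟨hUΩ hp, hnot⟩
    linarith
  -- derivative packages for the explicit parts
  have hgy : ∀ s : ℝ, HasDerivAt (fun s : ℝ => (1 - s ^ 2) / 2) (-s) s := by
    intro s
    have := ((hasDerivAt_pow 2 s).const_sub 1).div_const 2
    exact this.congr_deriv (by push_cast; ring)
  have hr1x : ∀ y0 s : ℝ, HasDerivAt
      (fun s => -((1 - y0 ^ 2) / 2) + -(E s * Real.cos y0)) (-(E' s * Real.cos y0)) s :=
    fun y0 s => (((hE s).mul_const _).neg).const_add _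
  have hr2x : ∀ y0 s : ℝ, HasDerivAt
      (fun s => (1 - y0 ^ 2) / 2 + -(E s * Real.cos y0)) (-(E' s * Real.cos y0)) s :=
    fun y0 s => (((hE s).mul_const _).neg).const_add _
  have hrx' : ∀ y0 t : ℝ, HasDerivAt
      (fun s => -(E' s * Real.cos y0)) (-(E t * Real.cos y0)) t :=
    fun y0 t => ((hE' t).mul_const _).neg
  have hr1y : ∀ x0 s : ℝ, HasDerivAt
      (fun s => -((1 - s ^ 2) / 2) + -(E x0 * Real.cos s)) (s + E x0 * Real.sin s) s :=
    fun x0 s => (((hgy s).neg).add ((Real.hasDerivAt_cos s).const_mul (E x0)).neg).congr_deriv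
      (by ring)
  have hr1y' : ∀ x0 t : ℝ, HasDerivAt
      (fun s : ℝ => s + E x0 * Real.sin s) (1 + E x0 * Real.cos t) t :=
    fun x0 t => (hasDerivAt_id t).add ((Real.hasDerivAt_sin t).const_mul (E x0))
  have hr2y : ∀ x0 s : ℝ, HasDerivAt
      (fun s => (1 - s ^ 2) / 2 + -(E x0 * Real.cos s)) (-s + E x0 * Real.sin s) s :=
    fun x0 s => ((hgy s).add ((Real.hasDerivAt_cos s).const_mul (E x0)).neg).congr_deriv
      (by ring)
  have hr2y' : ∀ x0 t : ℝ, HasDerivAt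
      (fun s : ℝ => -s + E x0 * Real.sin s) (-1 + E x0 * Real.cos t) t := by
    intro x0 t
    have h1 : HasDerivAt (fun s : ℝ => -s) (-1) t := by
      simpa using (hasDerivAt_neg t)
    exact h1.add ((Real.hasDerivAt_sin t).const_mul (E x0))
  -- continuity
  have hwcont : Continuous (fun q : ℝ × ℝ => E q.1 * Real.cos q.2) :=
    (hEcont.comp continuous_fst).mul (Real.continuous_cos.comp continuous_snd)
  have hgcont : Continuous (fun q : ℝ × ℝ => (1 - q.2 ^ 2) / 2) := by fun_prop
  have hucU : ContinuousOn u (closure U) := huc.mono (closure_mono hUΩ)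
  -- maximum principle for h₁
  have hm1 : ∀ p ∈ closure U, h₁ p ≤ 0 := by
    apply max_principle hUopen hUbd
    · exact hucU.add ((hgcont.neg.add hwcont.neg).continuousOn)
    · intro p hp
      filter_upwards [(slice_facts_x hΩopen hud (hUΩ hp)).1] with s hs
      exact hs.add ((hr1x p.2 s).differentiableAt)
    · intro p hp
      have hpx := slice_facts_x hΩopen hud (hUΩ hp)
      have heq : deriv (fun s => h₁ (s, p.2)) =ᶠ[𝓝 p.1]
          fun s => deriv (fun s => u (s, p.2)) s + -(E' s * Real.cos p.2) := by
        filter_upwards [hpx.1] with s hs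
        have e : (fun s => h₁ (s, p.2)) = fun s =>
            u (s, p.2) + (-((1 - p.2 ^ 2) / 2) + -(E s * Real.cos p.2)) := rfl
        rw [e, deriv_fun_add hs ((hr1x p.2 s).differentiableAt), (hr1x p.2 s).deriv]
      exact heq.differentiableAt_iff.2 (hpx.2.add ((hrx' p.2 p.1).differentiableAt))
    · intro p hp
      filter_upwards [(slice_facts_y hΩopen hud (hUΩ hp)).1] with s hs
      exact hs.add ((hr1y p.1 s).differentiableAt)
    · intro p hp
      have hpx := slice_facts_x hΩopen hud (hUΩ hp)
      have hpy := slice_facts_y hΩopen hud (hUΩ hp)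
      have hd2x : deriv (deriv (fun s => h₁ (s, p.2))) p.1
          = deriv (deriv (fun s => u (s, p.2))) p.1 + -(E p.1 * Real.cos p.2) := by
        have e : (fun s => h₁ (s, p.2)) = fun s =>
            u (s, p.2) + (-((1 - p.2 ^ 2) / 2) + -(E s * Real.cos p.2)) := rfl
        rw [e, d2_add hpx.1 (Filter.Eventually.of_forall
          fun s => (hr1x p.2 s).differentiableAt) hpx.2 (by
            have e2 : deriv (fun s => -((1 - p.2 ^ 2) / 2) + -(E s * Real.cos p.2))
                = fun s => -(E' s * Real.cos p.2) := funext fun s => (hr1x p.2 s).deriv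
            rw [e2]
            exact (hrx' p.2 p.1).differentiableAt)]
        congr 1
        exact d2_of_hasDerivAt (hr1x p.2) (hrx' p.2 p.1)
      have hd2y : deriv (deriv (fun s => h₁ (p.1, s))) p.2
          = deriv (deriv (fun s => u (p.1, s))) p.2 + (1 + E p.1 * Real.cos p.2) := by
        have e : (fun s => h₁ (p.1, s)) = fun s =>
            u (p.1, s) + (-((1 - s ^ 2) / 2) + -(E p.1 * Real.cos s)) := rfl
        rw [e, d2_add hpy.1 (Filter.Eventually.of_forall
          fun s => (hr1y p.1 s).differentiableAt) hpy.2 (by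
            have e2 : deriv (fun s => -((1 - s ^ 2) / 2) + -(E p.1 * Real.cos s))
                = fun s => s + E p.1 * Real.sin s := funext fun s => (hr1y p.1 s).deriv
            rw [e2]
            exact (hr1y' p.1 p.2).differentiableAt)]
        congr 1
        exact d2_of_hasDerivAt (hr1y p.1) (hr1y' p.1 p.2)
      have hlap1 : lap2 h₁ p = lap2 u p + 1 := by
        have e1 : lap2 h₁ p = deriv (deriv (fun s => h₁ (s, p.2))) p.1
            + deriv (deriv (fun s => h₁ (p.1, s))) p.2 := rfl
        have e2 : lap2 u p = deriv (deriv (fun s => u (s, p.2))) p.1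
            + deriv (deriv (fun s => u (p.1, s))) p.2 := rfl
        rw [e1, e2, hd2x, hd2y]
        ring
      rw [hlap1, hlapU p hp]
      norm_num
    · intro q hq
      have h := (abs_le.1 (hfrbound q hq)).2
      show u q + (-((1 - q.2 ^ 2) / 2) + -(E q.1 * Real.cos q.2)) ≤ 0
      linarith
  -- maximum principle for h₂
  have hm2 : ∀ p ∈ closure U, h₂ p ≤ 0 := by
    apply max_principle hUopen hUbd
    · exact hucU.neg.add ((hgcont.add hwcont.neg).continuousOn)
    · intro p hp
      filter_upwards [(slice_facts_x hΩopen hud (hUΩ hp)).1] with s hs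
      exact hs.neg.add ((hr2x p.2 s).differentiableAt)
    · intro p hp
      have hpx := slice_facts_x hΩopen hud (hUΩ hp)
      have heq : deriv (fun s => h₂ (s, p.2)) =ᶠ[𝓝 p.1]
          fun s => -(deriv (fun s => u (s, p.2)) s) + -(E' s * Real.cos p.2) := by
        filter_upwards [hpx.1] with s hs
        have e : (fun s => h₂ (s, p.2)) = fun s =>
            -(u (s, p.2)) + ((1 - p.2 ^ 2) / 2 + -(E s * Real.cos p.2)) := rfl
        rw [e, deriv_fun_add hs.fun_neg ((hr2x p.2 s).differentiableAt), (hr2x p.2 s).deriv,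
          deriv.fun_neg]
      exact heq.differentiableAt_iff.2
        (hpx.2.neg.add ((hrx' p.2 p.1).differentiableAt))
    · intro p hp
      filter_upwards [(slice_facts_y hΩopen hud (hUΩ hp)).1] with s hs
      exact hs.neg.add ((hr2y p.1 s).differentiableAt)
    · intro p hp
      have hpx := slice_facts_x hΩopen hud (hUΩ hp)
      have hpy := slice_facts_y hΩopen hud (hUΩ hp)
      have hnegx : deriv (deriv (fun s => -(u (s, p.2)))) p.1
          = -(deriv (deriv (fun s => u (s, p.2))) p.1) := d2_neg _ _
      have hnegy : deriv (deriv (fun s => -(u (p.1, s)))) p.2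
          = -(deriv (deriv (fun s => u (p.1, s))) p.2) := d2_neg _ _
      have hdevx : deriv (fun s => -(u (s, p.2))) = fun s =>
          -(deriv (fun s => u (s, p.2)) s) := funext fun s => deriv.neg
      have hdevy : deriv (fun s => -(u (p.1, s))) = fun s =>
          -(deriv (fun s => u (p.1, s)) s) := funext fun s => deriv.neg
      have hd2x : deriv (deriv (fun s => h₂ (s, p.2))) p.1
          = -(deriv (deriv (fun s => u (s, p.2))) p.1) + -(E p.1 * Real.cos p.2) := by
        have e : (fun s => h₂ (s, p.2)) = fun s =>
            -(u (s, p.2)) + ((1 - p.2 ^ 2) / 2 + -(E s * Real.cos p.2)) := rfl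
        rw [e, d2_add (hpx.1.mono fun s hs => hs.fun_neg) (Filter.Eventually.of_forall
          fun s => (hr2x p.2 s).differentiableAt) (by rw [hdevx]; exact hpx.2.neg) (by
            have e2 : deriv (fun s => (1 - p.2 ^ 2) / 2 + -(E s * Real.cos p.2))
                = fun s => -(E' s * Real.cos p.2) := funext fun s => (hr2x p.2 s).deriv
            rw [e2]
            exact (hrx' p.2 p.1).differentiableAt)]
        rw [hnegx]
        congr 1
        exact d2_of_hasDerivAt (hr2x p.2) (hrx' p.2 p.1)
      have hd2y : deriv (deriv (fun s => h₂ (p.1, s))) p.2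
          = -(deriv (deriv (fun s => u (p.1, s))) p.2) + (-1 + E p.1 * Real.cos p.2) := by
        have e : (fun s => h₂ (p.1, s)) = fun s =>
            -(u (p.1, s)) + ((1 - s ^ 2) / 2 + -(E p.1 * Real.cos s)) := rfl
        rw [e, d2_add (hpy.1.mono fun s hs => hs.fun_neg) (Filter.Eventually.of_forall
          fun s => (hr2y p.1 s).differentiableAt) (by rw [hdevy]; exact hpy.2.neg) (by
            have e2 : deriv (fun s => (1 - s ^ 2) / 2 + -(E p.1 * Real.cos s))
                = fun s => -s + E p.1 * Real.sin s := funext fun s => (hr2y p.1 s).deriv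
            rw [e2]
            exact (hr2y' p.1 p.2).differentiableAt)]
        rw [hnegy]
        congr 1
        exact d2_of_hasDerivAt (hr2y p.1) (hr2y' p.1 p.2)
      have hlap2 : lap2 h₂ p = -(lap2 u p) - 1 := by
        have e1 : lap2 h₂ p = deriv (deriv (fun s => h₂ (s, p.2))) p.1
            + deriv (deriv (fun s => h₂ (p.1, s))) p.2 := rfl
        have e2 : lap2 u p = deriv (deriv (fun s => u (s, p.2))) p.1
            + deriv (deriv (fun s => u (p.1, s))) p.2 := rfl
        rw [e1, e2, hd2x, hd2y]
        ring
      rw [hlap2, hlapU p hp]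
      norm_num
    · intro q hq
      have h := (abs_le.1 (hfrbound q hq)).1
      show -(u q) + ((1 - q.2 ^ 2) / 2 + -(E q.1 * Real.cos q.2)) ≤ 0
      linarith
  -- conclusion
  intro p hpcl hpx
  have hpS := hclos hpcl
  have hφp := hφ0 p.2
  have hEp : E p.1 = K * (Real.exp (C - p.1) + Real.exp (p.1 - a)) := rfl
  by_cases hyext : p.2 = 1 ∨ p.2 = -1
  · have hpnot : p ∉ Ω := by
      intro hpΩ
      obtain ⟨-, -, hz1, hz2⟩ := hpΩ
      rcases hyext with h | h
      · rw [h] at hz2; exact lt_irrefl _ hz2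
      · rw [h] at hz1; exact lt_irrefl _ hz1
    have hpf : p ∈ frontier Ω := by
      rw [hΩopen.frontier_eq]
      exact ⟨hpcl, hpnot⟩
    have hu0 : u p = 0 := hub p hpf
    have hg0 : (1 - p.2 ^ 2) / 2 = 0 := by
      rcases hyext with h | h <;> rw [h] <;> norm_num
    rw [hu0, hg0, sub_zero, abs_zero]
    positivity
  · push_neg at hyext
    have hy1 : -1 < p.2 := lt_of_le_of_ne hpS.1.1 (Ne.symm hyext.2)
    have hy2 : p.2 < 1 := lt_of_le_of_ne hpS.1.2 hyext.1
    have hpΩ : p ∈ Ω := by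
      refine ⟨?_, ?_, hy1, hy2⟩
      · have := hpx.1; linarith
      · have := hpx.2; linarith
    have hpU : p ∈ U := ⟨hpΩ, show C < p.1 by have := hpx.1; linarith⟩
    have h1 := hm1 p (subset_closure hpU)
    have h2 := hm2 p (subset_closure hpU)
    have e1 : h₁ p = u p + (-((1 - p.2 ^ 2) / 2) + -(E p.1 * Real.cos p.2)) := rfl
    have e2 : h₂ p = -(u p) + ((1 - p.2 ^ 2) / 2 + -(E p.1 * Real.cos p.2)) := rfl
    rw [e1] at h1
    rw [e2] at h2
    have hwle : E p.1 * Real.cos p.2 ≤ K * (Real.exp (C - p.1) + Real.exp (p.1 - a)) := by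
      rw [← hEp]
      have := Real.cos_le_one p.2
      nlinarith [hEpos p.1]
    rw [abs_le]
    constructor <;> linarith

lemma lap2_reflect (u : ℝ × ℝ → ℝ) (p : ℝ × ℝ) :
    lap2 (fun q => u (-q.1, q.2)) p = lap2 u (-p.1, p.2) := by
  have h1 : deriv (deriv (fun s => u (-s, p.2))) p.1
      = deriv (deriv (fun s => u (s, p.2))) (-p.1) := by
    have e1 : deriv (fun s => u (-s, p.2)) =
        fun s => -deriv (fun s => u (s, p.2)) (-s) := by
      funext s
      exact deriv_comp_neg (fun s => u (s, p.2)) s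
    rw [e1]
    have e2 : deriv (fun s => -deriv (fun s => u (s, p.2)) (-s)) p.1
        = -(deriv (fun s => deriv (fun s => u (s, p.2)) (-s)) p.1) := deriv.neg
    rw [e2, deriv_comp_neg (deriv (fun s => u (s, p.2))) p.1, neg_neg]
  show deriv (deriv (fun s => u (-s, p.2))) p.1
      + deriv (deriv (fun s => u (-p.1, s))) p.2 = _
  rw [h1]
  rfl

noncomputable def negFirst : ℝ × ℝ ≃ₜ ℝ × ℝ :=
  Homeomorph.prodCongr (Homeomorph.neg ℝ) (Homeomorph.refl ℝ)

example (q : ℝ × ℝ) : negFirst q = (-q.1, q.2) := rfl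

theorem stmt6 (φ : ℝ → ℝ)
    (hφc : ContinuousOn φ (Set.Icc (-1) 1)) (hφ0 : ∀ y ∈ Set.Icc (-1:ℝ) 1, 0 ≤ φ y)
    (hφcc : ConcaveOn ℝ (Set.Icc (-1:ℝ) 1) φ) (hφe : ∀ y : ℝ, φ (-y) = φ y)
    (hφm1 : φ (-1) = 0) (hφ1 : φ 1 = 0)
    (C : ℝ) (hC : 0 ≤ C) :
    ∀ ε > (0:ℝ), ∃ A : ℝ, 1 ≤ A ∧ ∃ M ∈ Set.Icc (0:ℝ) (A / 2),
      ∀ a : ℝ, A ≤ a → ∀ u : ℝ × ℝ → ℝ,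
        ContinuousOn u (closure (stadium φ a)) →
        ContDiffOn ℝ 2 u (stadium φ a) →
        (∀ p ∈ frontier (stadium φ a), u p = 0) →
        (∀ p ∈ stadium φ a \ (Set.Ioo (-C) C ×ˢ Set.Ioo (-1:ℝ) 1), u p ∈ Set.Icc (0:ℝ) 1) →
        (∀ p ∈ stadium φ a \ (Set.Icc (-C) C ×ˢ Set.Icc (-1:ℝ) 1), lap2 u p + 1 = 0) →
        ∀ p ∈ closure (stadium φ a),
          p.1 ∈ Set.Icc (-a + M) (-M) ∪ Set.Icc M (a - M) → p.2 ∈ Set.Icc (-1:ℝ) 1 →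
          |u p - (1 - p.2 ^ 2) / 2| ≤ ε := by
  intro ε hε
  -- the clamped profile function
  set φ' : ℝ → ℝ := fun y => φ (max (-1) (min 1 y)) with hφ'def
  have hclamp : ∀ y : ℝ, max (-1:ℝ) (min 1 y) ∈ Set.Icc (-1:ℝ) 1 := by
    intro y
    constructor
    · exact le_max_left _ _
    · exact max_le (by norm_num) (min_le_left _ _)
  have hφ'c : Continuous φ' := by
    apply hφc.comp_continuous _ hclamp
    fun_prop
  have hφ'0 : ∀ y, 0 ≤ φ' y := fun y => hφ0 _ (hclamp y)
  have hφmax : ∀ z ∈ Set.Icc (-1:ℝ) 1, φ z ≤ φ 0 := by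
    intro z hz
    have hz' : -z ∈ Set.Icc (-1:ℝ) 1 := by
      constructor
      · linarith [hz.2]
      · linarith [hz.1]
    have h := hφcc.2 hz hz' (by norm_num : (0:ℝ) ≤ 1/2) (by norm_num : (0:ℝ) ≤ 1/2)
      (by norm_num)
    have hzz : (1/2 : ℝ) • z + (1/2 : ℝ) • (-z) = 0 := by
      rw [smul_eq_mul, smul_eq_mul]; ring
    rw [hzz, hφe z] at h
    simp only [smul_eq_mul] at h
    linarith
  have hφ'B : ∀ y, φ' y ≤ φ 0 := fun y => hφmax _ (hclamp y)
  have hB0 : 0 ≤ φ 0 := hφ0 0 (by norm_num)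
  -- the stadium only depends on the restriction of φ to [-1,1]
  have hstad : ∀ a : ℝ, stadium φ a = stadium φ' a := by
    intro a
    unfold stadium
    ext q
    simp only [Set.mem_setOf_eq]
    constructor
    · rintro ⟨h1, h2, h3, h4⟩
      have e : φ' q.2 = φ q.2 := by
        show φ (max (-1) (min 1 q.2)) = φ q.2
        rw [min_eq_right h4.le, max_eq_right h3.le]
      rw [e]
      exact ⟨h1, h2, h3, h4⟩
    · rintro ⟨h1, h2, h3, h4⟩
      have e : φ' q.2 = φ q.2 := by
        show φ (max (-1) (min 1 q.2)) = φ q.2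
        rw [min_eq_right h4.le, max_eq_right h3.le]
      rw [e] at h1 h2
      exact ⟨h1, h2, h3, h4⟩
  -- constants
  have hπ : (3:ℝ) < Real.pi := Real.pi_gt_three
  have hcos1 : 0 < Real.cos 1 := by
    apply Real.cos_pos_of_mem_Ioo
    constructor <;> linarith
  set K : ℝ := (Real.cos 1)⁻¹ with hKdef
  have hK0 : 0 < K := by positivity
  set M : ℝ := C + max 1 (Real.log (2 * K / ε)) with hMdef
  have hM1 : C + 1 ≤ M := by
    have := le_max_left 1 (Real.log (2 * K / ε))
    rw [hMdef]; linarith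
  have hM0 : 0 ≤ M := by linarith
  refine ⟨2 * M + 2, by linarith, M, ⟨hM0, by linarith⟩, ?_⟩
  intro a ha u huc hud hub hu01 hulap p hpcl hpx hpy
  rw [hstad a] at huc hud hub hu01 hulap hpcl
  have h2M : 2 * M ≤ a := by linarith
  -- numeric bound on the barrier
  have hKε : 0 < 2 * K / ε := by positivity
  have hexplog : Real.exp (-(Real.log (2 * K / ε))) = ε / (2 * K) := by
    rw [Real.exp_neg, Real.exp_log hKε, inv_div]
  have hbound : ∀ x : ℝ, M ≤ x → x ≤ a - M →
      K * (Real.exp (C - x) + Real.exp (x - a)) ≤ ε := by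
    intro x h1 h2
    have hle : Real.log (2 * K / ε) ≤ max 1 (Real.log (2 * K / ε)) := le_max_right _ _
    have e1 : Real.exp (C - x) ≤ ε / (2 * K) := by
      rw [← hexplog]
      apply Real.exp_le_exp.2
      rw [hMdef] at h1
      linarith
    have e2 : Real.exp (x - a) ≤ ε / (2 * K) := by
      rw [← hexplog]
      apply Real.exp_le_exp.2
      rw [hMdef] at h2
      linarith
    calc K * (Real.exp (C - x) + Real.exp (x - a))
        ≤ K * (ε / (2 * K) + ε / (2 * K)) :=
          mul_le_mul_of_nonneg_left (add_le_add e1 e2) hK0.le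
      _ = ε := by field_simp; ring
  rcases hpx with hL | hR
  · -- left side, by reflection
    have hpre : negFirst ⁻¹' (stadium φ' a) = stadium φ' a := by
      ext q
      show ((-q.1, q.2) : ℝ × ℝ) ∈ stadium φ' a ↔ q ∈ stadium φ' a
      unfold stadium
      simp only [Set.mem_setOf_eq]
      constructor <;> rintro ⟨h1, h2, h3, h4⟩ <;>
        exact ⟨by linarith, by linarith, h3, h4⟩
    have hρcl : ∀ q : ℝ × ℝ, q ∈ closure (stadium φ' a) →
        ((-q.1, q.2) : ℝ × ℝ) ∈ closure (stadium φ' a) := by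
      intro q hq
      have e : negFirst ⁻¹' closure (stadium φ' a) = closure (stadium φ' a) := by
        rw [negFirst.preimage_closure, hpre]
      rw [← e] at hq
      exact hq
    have hρfr : ∀ q : ℝ × ℝ, q ∈ frontier (stadium φ' a) →
        ((-q.1, q.2) : ℝ × ℝ) ∈ frontier (stadium φ' a) := by
      intro q hq
      have e : negFirst ⁻¹' frontier (stadium φ' a) = frontier (stadium φ' a) := by
        rw [negFirst.preimage_frontier, hpre]
      rw [← e] at hq
      exact hq
    have hρs : ∀ q : ℝ × ℝ, q ∈ stadium φ' a →
        ((-q.1, q.2) : ℝ × ℝ) ∈ stadium φ' a := by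
      rintro q ⟨h1, h2, h3, h4⟩
      exact ⟨show -a - φ' q.2 < -q.1 by linarith, show -q.1 < a + φ' q.2 by linarith, h3, h4⟩
    set u' : ℝ × ℝ → ℝ := fun q => u (-q.1, q.2) with hu'def
    have huc' : ContinuousOn u' (closure (stadium φ' a)) := by
      apply huc.comp (Continuous.continuousOn (by fun_prop)) hρcl
    have hud' : ContDiffOn ℝ 2 u' (stadium φ' a) := by
      apply hud.comp _ hρs
      exact ((contDiff_fst.neg).prodMk contDiff_snd).contDiffOn
    have hub' : ∀ q ∈ frontier (stadium φ' a), u' q = 0 := fun q hq => hub _ (hρfr q hq)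
    have hu01' : ∀ q ∈ stadium φ' a \ (Set.Ioo (-C) C ×ˢ Set.Ioo (-1:ℝ) 1),
        u' q ∈ Set.Icc (0:ℝ) 1 := by
      intro q hq
      refine hu01 (-q.1, q.2) ⟨hρs q hq.1, ?_⟩
      rintro ⟨hx1, hx2⟩
      have hx1' : -C < -q.1 ∧ -q.1 < C := ⟨hx1.1, hx1.2⟩
      exact hq.2 ⟨⟨by linarith [hx1'.2], by linarith [hx1'.1]⟩, hx2⟩
    have hulap' : ∀ q ∈ stadium φ' a \ (Set.Icc (-C) C ×ˢ Set.Icc (-1:ℝ) 1),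
        lap2 u' q + 1 = 0 := by
      intro q hq
      have e : lap2 u' q = lap2 u (-q.1, q.2) := lap2_reflect u q
      rw [e]
      refine hulap (-q.1, q.2) ⟨hρs q hq.1, ?_⟩
      rintro ⟨hx1, hx2⟩
      have hx1' : -C ≤ -q.1 ∧ -q.1 ≤ C := ⟨hx1.1, hx1.2⟩
      exact hq.2 ⟨⟨by linarith [hx1'.2], by linarith [hx1'.1]⟩, hx2⟩
    have hres := key_right φ' hφ'c hφ'0 (φ 0) hφ'B C a M hC hM1 h2M u'
      huc' hud' hub' hu01' hulap' (-p.1, p.2) (hρcl p hpcl)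
      ⟨show M ≤ -p.1 by linarith [hL.2], show -p.1 ≤ a - M by linarith [hL.1]⟩
    have hval : u' (-p.1, p.2) = u p := by
      show u (-(-p.1), p.2) = u p
      rw [neg_neg]
    rw [hval] at hres
    refine le_trans hres ?_
    exact hbound (-p.1) (by linarith [hL.2]) (by linarith [hL.1])
  · exact le_trans
      (key_right φ' hφ'c hφ'0 (φ 0) hφ'B C a M hC hM1 h2M u huc hud hub hu01 hulap
        p hpcl hR)
      (hbound p.1 hR.1 hR.2)
end

section
/- Let h : ℝ × [−1,1] → ℝ be continuous and bounded, twice continuously differentiable in the open strip ℝ × (−1,1) with Δh = 0 there, and satisfying h(x,−1) = h(x,1) = 0 for all x ∈ ℝ. Then h is identically zero on ℝ × [−1,1]. -/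
open Set Metric MeasureTheory

open Filter Topology

section Aux

/-- Second derivative test: if `f` has derivative `fd` near `a`, `fd` has derivative `m` at
`a`, and `a` is a local max of `f`, then `m ≤ 0`. -/
lemma sd_nonpos {f fd : ℝ → ℝ} {a δ m : ℝ} (hδ : 0 < δ)
    (hf : ∀ t ∈ Ioo (a - δ) (a + δ), HasDerivAt f (fd t) t)
    (hfd : HasDerivAt fd m a) (hmax : IsLocalMax f a) : m ≤ 0 := by
  by_contra hm
  push_neg at hm
  have haI : a ∈ Ioo (a - δ) (a + δ) := by constructor <;> linarith
  have ha0 : fd a = 0 := hmax.hasDerivAt_eq_zero (hf a haI)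
  have hsl : Tendsto (slope fd a) (𝓝[≠] a) (𝓝 m) :=
    hasDerivAt_iff_tendsto_slope.mp hfd
  have hev : ∀ᶠ t in 𝓝[≠] a, 0 < slope fd a t := hsl.eventually (eventually_gt_nhds hm)
  have hev' : ∀ᶠ t in 𝓝[>] a, 0 < slope fd a t :=
    hev.filter_mono (nhdsWithin_mono a fun t ht => (ne_of_gt ht : t ≠ a))
  have hev2 : ∀ᶠ t in 𝓝[>] a, 0 < fd t := by
    filter_upwards [hev', self_mem_nhdsWithin] with t ht (hta : a < t)
    have : slope fd a t = fd t / (t - a) := by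
      simp [slope_def_field, ha0]
    rw [this] at ht
    have := mul_pos ht (by linarith : (0:ℝ) < t - a)
    rwa [div_mul_cancel₀] at this
    linarith
  have hev3 : ∀ᶠ t in 𝓝[>] a, t < a + δ :=
    eventually_nhdsWithin_of_eventually_nhds (eventually_lt_nhds (by linarith))
  have hev4 : ∀ᶠ t in 𝓝[>] a, f t ≤ f a :=
    eventually_nhdsWithin_of_eventually_nhds hmax
  obtain ⟨u, hu, hsub⟩ := mem_nhdsGT_iff_exists_Ioo_subset.mp
    ((hev2.and hev3).and hev4)
  set b := (a + u) / 2 with hb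
  have hab : a < b := by simp only [hb]; linarith [hu.out]
  have hbu : b < u := by simp only [hb]; linarith [hu.out]
  have hbmem : b ∈ Ioo a u := ⟨hab, hbu⟩
  have hbδ : b < a + δ := ((hsub hbmem).1).2
  have hmono : StrictMonoOn f (Icc a b) := by
    apply strictMonoOn_of_deriv_pos (convex_Icc a b)
    · intro x hx
      have hxI : x ∈ Ioo (a - δ) (a + δ) :=
        ⟨by linarith [hx.1], by linarith [hx.2]⟩
      exact (hf x hxI).continuousAt.continuousWithinAt
    · intro x hx
      rw [interior_Icc] at hx
      have hxI : x ∈ Ioo (a - δ) (a + δ) := ⟨by linarith [hx.1], by linarith [hx.2]⟩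
      rw [(hf x hxI).deriv]
      exact ((hsub ⟨hx.1, lt_trans hx.2 hbu⟩).1).1
  have h1 : f a < f b := hmono (left_mem_Icc.mpr hab.le) (right_mem_Icc.mpr hab.le) hab
  have h2 : f b ≤ f a := (hsub hbmem).2
  linarith

/-- The constant `π/4`. -/
noncomputable def kk : ℝ := Real.pi / 4

lemma kk_pos : 0 < kk := by
  have := Real.pi_pos; simp only [kk]; linarith

lemma kk_lt : kk < Real.pi / 2 := by
  have := Real.pi_pos; simp only [kk]; linarith

/-- The barrier function `cosh(kx)·cos(ky)`, `k = π/4`. -/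
noncomputable def bar (p : ℝ × ℝ) : ℝ := Real.cosh (kk * p.1) * Real.cos (kk * p.2)

lemma hd_klin (s : ℝ) : HasDerivAt (fun s : ℝ => kk * s) kk s := by
  simpa using (hasDerivAt_id s).const_mul kk

lemma bx1 (y s : ℝ) : HasDerivAt (fun s => Real.cosh (kk * s) * Real.cos (kk * y))
    (kk * Real.sinh (kk * s) * Real.cos (kk * y)) s := by
  have h := ((Real.hasDerivAt_cosh (kk * s)).comp s (hd_klin s)).mul_const (Real.cos (kk * y))
  refine h.congr_deriv ?_
  ring

lemma bx2 (y s : ℝ) : HasDerivAt (fun s => kk * Real.sinh (kk * s) * Real.cos (kk * y))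
    (kk * kk * Real.cosh (kk * s) * Real.cos (kk * y)) s := by
  have h := (((Real.hasDerivAt_sinh (kk * s)).comp s (hd_klin s)).const_mul kk).mul_const
    (Real.cos (kk * y))
  refine h.congr_deriv ?_
  ring

lemma by1 (x t : ℝ) : HasDerivAt (fun t => Real.cosh (kk * x) * Real.cos (kk * t))
    (-(kk * Real.cosh (kk * x) * Real.sin (kk * t))) t := by
  have h := ((Real.hasDerivAt_cos (kk * t)).comp t (hd_klin t)).const_mul (Real.cosh (kk * x))
  refine h.congr_deriv ?_
  ring

lemma by2 (x t : ℝ) : HasDerivAt (fun t => -(kk * Real.cosh (kk * x) * Real.sin (kk * t)))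
    (-(kk * kk * Real.cosh (kk * x) * Real.cos (kk * t))) t := by
  have h := ((((Real.hasDerivAt_sin (kk * t)).comp t (hd_klin t)).const_mul
    (kk * Real.cosh (kk * x))).neg)
  refine h.congr_deriv ?_
  ring

lemma cos_kk_pos : 0 < Real.cos kk :=
  Real.cos_pos_of_mem_Ioo ⟨by linarith [kk_pos, kk_lt], kk_lt⟩

lemma cos_ky_nonneg {y : ℝ} (hy : y ∈ Icc (-1:ℝ) 1) : 0 ≤ Real.cos (kk * y) := by
  apply Real.cos_nonneg_of_mem_Icc
  have h1 := hy.1; have h2 := hy.2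
  constructor
  · nlinarith [kk_pos, kk_lt]
  · nlinarith [kk_pos, kk_lt]

lemma cos_ky_ge {y : ℝ} (hy : y ∈ Icc (-1:ℝ) 1) : Real.cos kk ≤ Real.cos (kk * y) := by
  rw [← Real.cos_abs (kk * y)]
  apply Real.cos_le_cos_of_nonneg_of_le_pi (abs_nonneg _)
  · have := Real.pi_pos; simp only [kk]; linarith
  · rw [abs_mul, abs_of_pos kk_pos]
    have hy' : |y| ≤ 1 := abs_le.mpr ⟨hy.1, hy.2⟩
    nlinarith [kk_pos]

lemma continuous_bar : Continuous bar := by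
  unfold bar; fun_prop

lemma upper (h : ℝ × ℝ → ℝ) (C : ℝ)
    (hc : ContinuousOn h (Set.univ ×ˢ Set.Icc (-1:ℝ) 1))
    (hC : ∀ p ∈ Set.univ ×ˢ Set.Icc (-1:ℝ) 1, |h p| ≤ C)
    (hd : ContDiffOn ℝ 2 h (Set.univ ×ˢ Set.Ioo (-1:ℝ) 1))
    (hharm : ∀ p ∈ Set.univ ×ˢ Set.Ioo (-1:ℝ) 1, lap2 h p = 0)
    (hbc : ∀ x : ℝ, h (x, -1) = 0 ∧ h (x, 1) = 0) :
    ∀ p ∈ Set.univ ×ˢ Set.Icc (-1:ℝ) 1, h p ≤ 0 := by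
  -- slice smoothness
  have hX : ∀ c ∈ Ioo (-1:ℝ) 1, ContDiff ℝ 2 (fun s => h (s, c)) := by
    intro c hc'
    have hmap : ∀ s ∈ (univ : Set ℝ), ((s, c) : ℝ × ℝ) ∈ Set.univ ×ˢ Set.Ioo (-1:ℝ) 1 :=
      fun s _ => ⟨trivial, hc'⟩
    have := hd.comp ((contDiff_id.prodMk contDiff_const).contDiffOn) hmap
    exact contDiffOn_univ.mp this
  have hY : ∀ a : ℝ, ContDiffOn ℝ 2 (fun t => h (a, t)) (Ioo (-1:ℝ) 1) := by
    intro a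
    have hmap : ∀ t ∈ Ioo (-1:ℝ) 1, ((a, t) : ℝ × ℝ) ∈ Set.univ ×ˢ Set.Ioo (-1:ℝ) 1 :=
      fun t ht => ⟨trivial, ht⟩
    exact hd.comp ((contDiff_const.prodMk contDiff_id).contDiffOn) hmap
  rintro ⟨x0, y0⟩ ⟨-, hy0⟩
  -- the barrier is positive at the point
  have hbar0 : 0 < bar (x0, y0) :=
    mul_pos (Real.cosh_pos _) (lt_of_lt_of_le cos_kk_pos (cos_ky_ge hy0))
  -- key estimate: for all η > 0, h (x0,y0) ≤ η * bar (x0,y0)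
  suffices hkey : ∀ η > 0, h (x0, y0) ≤ η * bar (x0, y0) by
    by_contra hpos
    push_neg at hpos
    have hη : 0 < h (x0, y0) / (2 * bar (x0, y0)) := by positivity
    have := hkey _ hη
    rw [div_mul_eq_mul_div, mul_comm] at this
    have h2 : bar (x0, y0) * h (x0, y0) / (2 * bar (x0, y0)) = h (x0, y0) / 2 := by
      field_simp
    rw [h2] at this
    linarith
  intro η hη
  obtain ⟨R, hRdef⟩ : ∃ R : ℝ, R = 1 + |x0| + max 0 (2 * C / (kk * η * Real.cos kk)) :=
    ⟨_, rfl⟩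
  have hR0 : 0 < R := by
    have := abs_nonneg x0
    have := le_max_left (0:ℝ) (2 * C / (kk * η * Real.cos kk))
    simp only [hRdef]; linarith
  have hRx : |x0| ≤ R := by
    have := le_max_left (0:ℝ) (2 * C / (kk * η * Real.cos kk))
    simp only [hRdef]; linarith
  -- R is large enough for the barrier to dominate C on the vertical sides
  have hRC : C ≤ η * Real.cosh (kk * R) * Real.cos kk := by
    rcases le_or_gt C 0 with hC0 | hC0
    · have : 0 < η * Real.cosh (kk * R) * Real.cos kk :=
        mul_pos (mul_pos hη (Real.cosh_pos _)) cos_kk_pos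
      linarith
    · have hd1 : 0 < kk * η * Real.cos kk := mul_pos (mul_pos kk_pos hη) cos_kk_pos
      have hRge : 2 * C / (kk * η * Real.cos kk) ≤ R := by
        have := le_max_right (0:ℝ) (2 * C / (kk * η * Real.cos kk))
        have := abs_nonneg x0
        simp only [hRdef]; linarith
      have e1 : kk * R + 1 ≤ Real.exp (kk * R) := Real.add_one_le_exp _
      have e2 : 0 < Real.exp (-(kk * R)) := Real.exp_pos _
      have e3 : Real.cosh (kk * R) = (Real.exp (kk * R) + Real.exp (-(kk * R))) / 2 :=
        Real.cosh_eq _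
      have e4 : kk * R / 2 ≤ Real.cosh (kk * R) := by rw [e3]; linarith
      have h5 : 2 * C ≤ kk * η * Real.cos kk * R := by
        have := (div_le_iff₀ hd1).mp hRge
        linarith
      nlinarith [Real.cosh_pos (kk * R), hη, cos_kk_pos, kk_pos]
  -- the maximum principle estimate on the rectangle, for every ε > 0
  have MP : ∀ ε > 0, ∀ q ∈ Icc (-R) R ×ˢ Icc (-1:ℝ) 1,
      h q - η * bar q + ε * q.1 ^ 2 ≤ ε * R ^ 2 := by
    intro ε hε
    have hKne : (Icc (-R) R ×ˢ Icc (-1:ℝ) 1).Nonempty := by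
      refine ⟨(0, 0), ⟨?_, ?_⟩⟩
      · simp only [mem_Icc]; constructor <;> linarith
      · simp only [mem_Icc]; norm_num
    have hwc : ContinuousOn (fun q : ℝ × ℝ => h q - η * bar q + ε * q.1 ^ 2)
        (Icc (-R) R ×ˢ Icc (-1:ℝ) 1) := by
      apply ContinuousOn.add
      · exact (hc.mono (prod_mono (subset_univ _) le_rfl)).sub
          ((continuous_bar.const_smul η).continuousOn)
      · exact (Continuous.continuousOn (by fun_prop))
    obtain ⟨q0, hq0K, hq0max⟩ :=
      (isCompact_Icc.prod isCompact_Icc).exists_isMaxOn hKne hwc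
    have hq0max' : ∀ q ∈ Icc (-R) R ×ˢ Icc (-1:ℝ) 1,
        h q - η * bar q + ε * q.1 ^ 2 ≤ h q0 - η * bar q0 + ε * q0.1 ^ 2 :=
      fun q hq => hq0max hq
    by_cases hU : q0 ∈ Ioo (-R) R ×ˢ Ioo (-1:ℝ) 1
    · -- interior maximum is impossible
      exfalso
      obtain ⟨a, c⟩ := q0
      have haU : a ∈ Ioo (-R) R := hU.1
      have hcU : c ∈ Ioo (-1:ℝ) 1 := hU.2
      -- x-slice data
      have hF : ContDiff ℝ 2 (fun s => h (s, c)) := hX c hcU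
      have h2eq : ((2 : WithTop ℕ∞)) = 1 + 1 := by norm_num
      rw [h2eq] at hF
      obtain ⟨hF1, -, hF2⟩ := contDiff_succ_iff_deriv.mp hF
      have hF2' : Differentiable ℝ (deriv (fun s => h (s, c))) := hF2.differentiable one_ne_zero
      have hFw : ∀ s : ℝ, HasDerivAt (fun s => h (s, c) - η * bar (s, c) + ε * s ^ 2)
          (deriv (fun s => h (s, c)) s - η * (kk * Real.sinh (kk * s) * Real.cos (kk * c))
            + ε * (2 * s)) s := by
        intro s
        have d1 : HasDerivAt (fun s => h (s, c)) (deriv (fun s => h (s, c)) s) s :=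
          (hF1 s).hasDerivAt
        have d2 := (bx1 c s).const_mul η
        have d3 : HasDerivAt (fun s : ℝ => ε * s ^ 2) (ε * (2 * s)) s := by
          simpa using (hasDerivAt_pow 2 s).const_mul ε
        exact (d1.sub d2).add d3
      have hFd' : HasDerivAt (fun s => deriv (fun s => h (s, c)) s
            - η * (kk * Real.sinh (kk * s) * Real.cos (kk * c)) + ε * (2 * s))
          (deriv (deriv (fun s => h (s, c))) a
            - η * (kk * kk * Real.cosh (kk * a) * Real.cos (kk * c)) + ε * 2) a := by
        have d1 : HasDerivAt (deriv (fun s => h (s, c)))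
            (deriv (deriv (fun s => h (s, c))) a) a := (hF2' a).hasDerivAt
        have d2 := (bx2 c a).const_mul η
        have d3 : HasDerivAt (fun s : ℝ => ε * (2 * s)) (ε * 2) a := by
          simpa using ((hasDerivAt_id a).const_mul (2:ℝ)).const_mul ε
        exact (d1.sub d2).add d3
      have hUopen : IsOpen (Ioo (-R) R ×ˢ Ioo (-1:ℝ) 1) := isOpen_Ioo.prod isOpen_Ioo
      have hUK : (Ioo (-R) R ×ˢ Ioo (-1:ℝ) 1) ⊆ Icc (-R) R ×ˢ Icc (-1:ℝ) 1 :=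
        prod_mono Ioo_subset_Icc_self Ioo_subset_Icc_self
      have hlocF : IsLocalMax (fun s => h (s, c) - η * bar (s, c) + ε * s ^ 2) a := by
        have hcont : Continuous fun s : ℝ => ((s, c) : ℝ × ℝ) := by fun_prop
        have hmem : {s : ℝ | ((s, c) : ℝ × ℝ) ∈ Ioo (-R) R ×ˢ Ioo (-1:ℝ) 1} ∈ 𝓝 a :=
          (hUopen.preimage hcont).mem_nhds hU
        filter_upwards [hmem] with s hs
        exact hq0max' (s, c) (hUK hs)
      have hFineq : deriv (deriv (fun s => h (s, c))) a
          - η * (kk * kk * Real.cosh (kk * a) * Real.cos (kk * c)) + ε * 2 ≤ 0 :=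
        sd_nonpos one_pos (fun t _ => hFw t) hFd' hlocF
      -- y-slice data
      have hG : ContDiffOn ℝ 2 (fun t => h (a, t)) (Ioo (-1:ℝ) 1) := hY a
      rw [h2eq] at hG
      obtain ⟨hG1, -, hG2⟩ := (contDiffOn_succ_iff_deriv_of_isOpen isOpen_Ioo).mp hG
      have hGdiff : ∀ t ∈ Ioo (-1:ℝ) 1,
          HasDerivAt (fun t => h (a, t)) (deriv (fun t => h (a, t)) t) t := fun t ht =>
        ((hG1 t ht).differentiableAt (isOpen_Ioo.mem_nhds ht)).hasDerivAt
      have hG2' : DifferentiableAt ℝ (deriv (fun t => h (a, t))) c :=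
        (hG2.differentiableOn one_ne_zero c hcU).differentiableAt (isOpen_Ioo.mem_nhds hcU)
      set δ' : ℝ := min (c + 1) (1 - c) with hδ'def
      have hδ' : 0 < δ' := by
        have h1 := hcU.1; have h2 := hcU.2
        simp only [hδ'def, lt_min_iff]; constructor <;> linarith
      have hsubδ : Ioo (c - δ') (c + δ') ⊆ Ioo (-1:ℝ) 1 := by
        intro t ht
        have l1 : δ' ≤ c + 1 := min_le_left _ _
        have l2 : δ' ≤ 1 - c := min_le_right _ _
        exact ⟨by linarith [ht.1], by linarith [ht.2]⟩
      have hGw : ∀ t ∈ Ioo (c - δ') (c + δ'),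
          HasDerivAt (fun t => h (a, t) - η * bar (a, t) + ε * a ^ 2)
            (deriv (fun t => h (a, t)) t
              - η * (-(kk * Real.cosh (kk * a) * Real.sin (kk * t)))) t := by
        intro t ht
        have ht' := hsubδ ht
        have d1 := hGdiff t ht'
        have d2 := (by1 a t).const_mul η
        have d3 : HasDerivAt (fun _ : ℝ => ε * a ^ 2) 0 t := hasDerivAt_const _ _
        exact ((d1.sub d2).add d3).congr_deriv (by ring)
      have hGd' : HasDerivAt (fun t => deriv (fun t => h (a, t)) t
            - η * (-(kk * Real.cosh (kk * a) * Real.sin (kk * t))))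
          (deriv (deriv (fun t => h (a, t))) c
            - η * (-(kk * kk * Real.cosh (kk * a) * Real.cos (kk * c)))) c :=
        (hG2'.hasDerivAt).sub ((by2 a c).const_mul η)
      have hlocG : IsLocalMax (fun t => h (a, t) - η * bar (a, t) + ε * a ^ 2) c := by
        have hcont : Continuous fun t : ℝ => ((a, t) : ℝ × ℝ) := by fun_prop
        have hmem : {t : ℝ | ((a, t) : ℝ × ℝ) ∈ Ioo (-R) R ×ˢ Ioo (-1:ℝ) 1} ∈ 𝓝 c :=
          (hUopen.preimage hcont).mem_nhds hU
        filter_upwards [hmem] with t ht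
        exact hq0max' (a, t) (hUK ht)
      have hGineq : deriv (deriv (fun t => h (a, t))) c
          - η * (-(kk * kk * Real.cosh (kk * a) * Real.cos (kk * c))) ≤ 0 :=
        sd_nonpos hδ' hGw hGd' hlocG
      -- harmonicity
      have harm : deriv (deriv (fun s => h (s, c))) a
          + deriv (deriv (fun t => h (a, t))) c = 0 := by
        have := hharm (a, c) ⟨trivial, hcU⟩
        simpa only [lap2] using this
      nlinarith [hFineq, hGineq, harm, hε]
    · -- maximum is on the boundary
      have hq1 : q0.1 ∈ Icc (-R) R := hq0K.1
      have hq2 : q0.2 ∈ Icc (-1:ℝ) 1 := hq0K.2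
      have hsq : q0.1 ^ 2 ≤ R ^ 2 := sq_le_sq' (by linarith [hq1.1]) hq1.2
      have hbd : h q0 - η * bar q0 ≤ 0 := by
        by_cases hq2' : q0.2 ∈ Ioo (-1:ℝ) 1
        · -- then q0.1 = ±R
          have hq1' : q0.1 ∉ Ioo (-R) R := fun hq1' => hU ⟨hq1', hq2'⟩
          have hcases : q0.1 = -R ∨ q0.1 = R := by
            rcases lt_or_ge q0.1 R with hlt | hge
            · left
              by_contra hne
              exact hq1' ⟨lt_of_le_of_ne hq1.1 (Ne.symm hne), hlt⟩
            · right; exact le_antisymm hq1.2 hge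
          have hcosh : Real.cosh (kk * q0.1) = Real.cosh (kk * R) := by
            rcases hcases with hc1 | hc1 <;> rw [hc1]
            · rw [mul_neg, Real.cosh_neg]
          have hbarq : Real.cosh (kk * R) * Real.cos kk ≤ bar q0 := by
            unfold bar
            rw [hcosh]
            exact mul_le_mul_of_nonneg_left (cos_ky_ge hq2) (Real.cosh_pos _).le
          have hhq : h q0 ≤ C := (abs_le.mp (hC q0 ⟨trivial, hq2⟩)).2
          have := mul_le_mul_of_nonneg_left hbarq hη.le
          nlinarith [hRC]
        · -- then q0.2 = ±1
          have hcases : q0.2 = -1 ∨ q0.2 = 1 := by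
            rcases lt_or_ge q0.2 1 with hlt | hge
            · left
              by_contra hne
              exact hq2' ⟨lt_of_le_of_ne hq2.1 (Ne.symm hne), hlt⟩
            · right; exact le_antisymm hq2.2 hge
          have h0 : h q0 = 0 := by
            have hq0eta : q0 = (q0.1, q0.2) := rfl
            rcases hcases with hc1 | hc1
            · rw [hq0eta, hc1]; exact (hbc q0.1).1
            · rw [hq0eta, hc1]; exact (hbc q0.1).2
          have hbarnn : 0 ≤ bar q0 :=
            mul_nonneg (Real.cosh_pos _).le (cos_ky_nonneg hq2)
          nlinarith [hη]
      intro q hq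
      have h1 := hq0max' q hq
      have h2 : ε * q0.1 ^ 2 ≤ ε * R ^ 2 := mul_le_mul_of_nonneg_left hsq hε.le
      linarith
  -- conclude from MP by letting ε → 0
  have hmem : ((x0, y0) : ℝ × ℝ) ∈ Icc (-R) R ×ˢ Icc (-1:ℝ) 1 := by
    constructor
    · exact abs_le.mp hRx
    · exact hy0
  have hfinal : ∀ ε > 0, h (x0, y0) - η * bar (x0, y0) ≤ ε * R ^ 2 := by
    intro ε hε
    have := MP ε hε (x0, y0) hmem
    have hx2 : 0 ≤ ε * x0 ^ 2 := by positivity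
    simpa using by linarith
  by_contra hcon
  push_neg at hcon
  set d : ℝ := h (x0, y0) - η * bar (x0, y0) with hddef
  have hd0 : 0 < d := by simp only [hddef]; linarith
  have hε : 0 < d / (2 * R ^ 2) := by positivity
  have := hfinal _ hε
  rw [div_mul_eq_mul_div] at this
  have : d ≤ d / 2 := by
    have hR2 : (0:ℝ) < R ^ 2 := by positivity
    calc d ≤ d * R ^ 2 / (2 * R ^ 2) := this
      _ = d / 2 := by field_simp
  linarith

end Aux

/-- Liouville-type theorem: a bounded harmonic function on the strip `ℝ × [-1,1]`
vanishing on both boundary lines is identically zero. -/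
theorem stmt7 (h : ℝ × ℝ → ℝ)
    (hc : ContinuousOn h (Set.univ ×ˢ Set.Icc (-1:ℝ) 1))
    (hb : ∃ C : ℝ, ∀ p ∈ Set.univ ×ˢ Set.Icc (-1:ℝ) 1, |h p| ≤ C)
    (hd : ContDiffOn ℝ 2 h (Set.univ ×ˢ Set.Ioo (-1:ℝ) 1))
    (hharm : ∀ p ∈ Set.univ ×ˢ Set.Ioo (-1:ℝ) 1, lap2 h p = 0)
    (hbc : ∀ x : ℝ, h (x, -1) = 0 ∧ h (x, 1) = 0) :
    ∀ p ∈ Set.univ ×ˢ Set.Icc (-1:ℝ) 1, h p = 0 := by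
  obtain ⟨C, hC⟩ := hb
  have hle := upper h C hc hC hd hharm hbc
  have hneg : ∀ p ∈ Set.univ ×ˢ Set.Icc (-1:ℝ) 1, -h p ≤ 0 := by
    apply upper (fun p => -h p) C
    · exact hc.neg
    · intro p hp; rw [abs_neg]; exact hC p hp
    · exact hd.neg
    · intro p hp
      have := hharm p hp
      simp only [lap2, deriv.fun_neg] at this ⊢
      linarith
    · intro x
      constructor <;> simp [hbc x]
  intro p hp
  have h1 := hle p hp
  have h2 := hneg p hp
  linarith
end

section
/- Let u : ℝ × [−1,1] → ℝ be continuous and bounded, twice continuously differentiable in the open strip ℝ × (−1,1) with Δu + 1 = 0 there, and satisfying u(x,−1) = u(x,1) = 0 for all x ∈ ℝ. Then u(x,y) = (1−y²)/2 for all (x,y) ∈ ℝ × [−1,1]. -/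
open Set Metric MeasureTheory

open Filter Topology in
/-- Second-derivative test: at an interior local maximum the second derivative is nonpositive. -/
lemma lemA8 {f : ℝ → ℝ} {a : ℝ}
    (hmax : IsLocalMax f a)
    (hf : ∀ᶠ x in 𝓝 a, DifferentiableAt ℝ f x)
    (hf' : DifferentiableAt ℝ (deriv f) a) :
    deriv (deriv f) a ≤ 0 := by
  by_contra hpos
  push_neg at hpos
  have h0 : deriv f a = 0 := hmax.deriv_eq_zero
  have hslope : Tendsto (slope (deriv f) a) (𝓝[≠] a) (𝓝 (deriv (deriv f) a)) :=
    hasDerivAt_iff_tendsto_slope.mp hf'.hasDerivAt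
  have hev : ∀ᶠ x in 𝓝[≠] a, 0 < slope (deriv f) a x :=
    hslope.eventually (eventually_gt_nhds hpos)
  have hev' : ∀ᶠ x in 𝓝[>] a, 0 < slope (deriv f) a x :=
    hev.filter_mono (nhdsWithin_mono a fun x hx => ne_of_gt hx)
  have hmax' : ∀ᶠ x in 𝓝[>] a, f x ≤ f a := hmax.filter_mono nhdsWithin_le_nhds
  have hfd : ∀ᶠ x in 𝓝[>] a, DifferentiableAt ℝ f x := hf.filter_mono nhdsWithin_le_nhds
  have hcomb := (hev'.and hmax').and hfd
  rw [eventually_iff, mem_nhdsGT_iff_exists_Ioo_subset] at hcomb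
  obtain ⟨b, hb, hsub⟩ := hcomb
  rw [mem_Ioi] at hb
  set x := (a + b) / 2 with hxdef
  have hx : x ∈ Ioo a b := ⟨by simp only [hxdef]; linarith, by simp only [hxdef]; linarith⟩
  have hmono : StrictMonoOn f (Icc a x) := by
    apply strictMonoOn_of_deriv_pos (convex_Icc a x)
    · intro t ht
      rcases eq_or_lt_of_le ht.1 with rfl | h
      · exact (hf.self_of_nhds).continuousAt.continuousWithinAt
      · exact ((hsub ⟨h, lt_of_le_of_lt ht.2 hx.2⟩).2).continuousAt.continuousWithinAt
    · intro t ht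
      rw [interior_Icc] at ht
      have hts : t ∈ Ioo a b := ⟨ht.1, lt_trans ht.2 hx.2⟩
      have hsl := (hsub hts).1.1
      rw [slope_def_field, h0] at hsl
      have h1 : 0 < deriv f t / (t - a) := by simpa [div_eq_mul_inv] using hsl
      have ht0 : 0 < t - a := by linarith [ht.1]
      rcases div_pos_iff.mp h1 with ⟨h2, _⟩ | ⟨_, h2⟩
      · exact h2
      · linarith
  have : f a < f x := hmono ⟨le_refl a, le_of_lt hx.1⟩ ⟨le_of_lt hx.1, le_refl x⟩ hx.1
  exact absurd (hsub hx).1.2 (not_le.mpr this)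

open Filter Topology in
/-- Maximum principle on the rectangle `[-R,R] × [-1,1]` for functions with positive `lap2`. -/
lemma lemB8 {G : ℝ × ℝ → ℝ} {R : ℝ} (hR : 0 < R)
    (hcont : ContinuousOn G (Icc (-R) R ×ˢ Icc (-1:ℝ) 1))
    (hslice1 : ∀ y ∈ Ioo (-1:ℝ) 1, ContDiff ℝ 2 (fun s => G (s, y)))
    (hslice2 : ∀ x : ℝ, ContDiffOn ℝ 2 (fun s => G (x, s)) (Ioo (-1:ℝ) 1))
    (hsub : ∀ p ∈ Ioo (-R) R ×ˢ Ioo (-1:ℝ) 1, 0 < lap2 G p)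
    (hbd : ∀ p ∈ (Icc (-R) R ×ˢ Icc (-1:ℝ) 1) \ (Ioo (-R) R ×ˢ Ioo (-1:ℝ) 1), G p ≤ 0) :
    ∀ p ∈ Icc (-R) R ×ˢ Icc (-1:ℝ) 1, G p ≤ 0 := by
  have hK : IsCompact (Icc (-R) R ×ˢ Icc (-1:ℝ) 1) := isCompact_Icc.prod isCompact_Icc
  have hne : (Icc (-R) R ×ˢ Icc (-1:ℝ) 1).Nonempty :=
    ⟨(0, 0), ⟨by constructor <;> simp <;> linarith, by constructor <;> norm_num⟩⟩
  obtain ⟨p₀, hp₀K, hp₀⟩ := hK.exists_isMaxOn hne hcont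
  intro p hp
  by_contra hGp
  push_neg at hGp
  have hGp₀ : 0 < G p₀ := lt_of_lt_of_le hGp (hp₀ hp)
  have hp₀U : p₀ ∈ Ioo (-R) R ×ˢ Ioo (-1:ℝ) 1 := by
    by_contra h
    exact absurd (hbd p₀ ⟨hp₀K, h⟩) (not_le.mpr hGp₀)
  have hUopen : IsOpen (Ioo (-R) R ×ˢ Ioo (-1:ℝ) 1) := isOpen_Ioo.prod isOpen_Ioo
  have hUsub : Ioo (-R) R ×ˢ Ioo (-1:ℝ) 1 ⊆ Icc (-R) R ×ˢ Icc (-1:ℝ) 1 :=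
    prod_mono Ioo_subset_Icc_self Ioo_subset_Icc_self
  have hloc : IsLocalMax G p₀ :=
    hp₀.isLocalMax (Filter.mem_of_superset (hUopen.mem_nhds hp₀U) hUsub)
  have hf1 : ContDiff ℝ 2 (fun s => G (s, p₀.2)) := hslice1 p₀.2 hp₀U.2
  have hloc1 : IsLocalMax (fun s => G (s, p₀.2)) p₀.1 := by
    have : ContinuousAt (fun s : ℝ => (s, p₀.2)) p₀.1 :=
      (continuous_id.prodMk continuous_const).continuousAt
    exact hloc.comp_continuous this
  have hd1 : deriv (deriv (fun s => G (s, p₀.2))) p₀.1 ≤ 0 := by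
    apply lemA8 hloc1
    · exact Eventually.of_forall fun x =>
        (hf1.differentiable (by norm_num)).differentiableAt
    · have : ContDiff ℝ 1 (deriv (fun s => G (s, p₀.2))) := by
        have := contDiff_succ_iff_deriv.mp
          (show ContDiff ℝ (1+1) (fun s => G (s, p₀.2)) by exact_mod_cast hf1)
        exact this.2.2
      exact (this.differentiable one_ne_zero).differentiableAt
  have hf2 : ContDiffOn ℝ 2 (fun s => G (p₀.1, s)) (Ioo (-1:ℝ) 1) := hslice2 p₀.1
  have hloc2 : IsLocalMax (fun s => G (p₀.1, s)) p₀.2 := by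
    have : ContinuousAt (fun s : ℝ => (p₀.1, s)) p₀.2 :=
      (continuous_const.prodMk continuous_id).continuousAt
    exact hloc.comp_continuous this
  have hd2 : deriv (deriv (fun s => G (p₀.1, s))) p₀.2 ≤ 0 := by
    apply lemA8 hloc2
    · filter_upwards [isOpen_Ioo.mem_nhds hp₀U.2] with s hs
      exact (hf2.differentiableOn (by norm_num)).differentiableAt (isOpen_Ioo.mem_nhds hs)
    · have h1 : ContDiffOn ℝ 1 (deriv (fun s => G (p₀.1, s))) (Ioo (-1:ℝ) 1) :=
        hf2.deriv_of_isOpen isOpen_Ioo (by norm_num)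
      exact (h1.differentiableOn one_ne_zero).differentiableAt (isOpen_Ioo.mem_nhds hp₀U.2)
  have := hsub p₀ hp₀U
  rw [lap2] at this
  linarith

lemma sinh_sq_ge8 (s : ℝ) : s ^ 2 ≤ Real.sinh s ^ 2 := by
  have h1 : |s| ≤ Real.sinh |s| := Real.self_le_sinh_iff.mpr (abs_nonneg s)
  have h2 : Real.sinh |s| = |Real.sinh s| := (Real.abs_sinh s).symm
  calc s ^ 2 = |s| ^ 2 := (sq_abs s).symm
    _ ≤ |Real.sinh s| ^ 2 := by
        apply pow_le_pow_left₀ (abs_nonneg s); rw [← h2]; exact h1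
    _ = Real.sinh s ^ 2 := sq_abs _

lemma cosh_quad8 (t : ℝ) : 1 + t ^ 2 / 4 ≤ Real.cosh t := by
  have h := Real.cosh_two_mul (t / 2)
  have h2 : (2 : ℝ) * (t / 2) = t := by ring
  rw [h2] at h
  nlinarith [sinh_sq_ge8 (t / 2), Real.one_le_cosh (t / 2), sq_nonneg (Real.cosh (t / 2))]

lemma cosh_side8 {R : ℝ} (hR : 32 ≤ R) : R + R ^ 2 / 4 ≤ Real.cosh R := by
  have e1 : Real.exp R = Real.exp (R / 4) ^ 4 := by
    rw [← Real.exp_nat_mul]; congr 1; push_cast; ring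
  have e2 : 1 + R / 4 ≤ Real.exp (R / 4) := by
    have := Real.add_one_le_exp (R / 4); linarith
  have e3 : (1 + R / 4) ^ 4 ≤ Real.exp (R / 4) ^ 4 :=
    pow_le_pow_left₀ (by linarith) e2 4
  have e4 : Real.exp R / 2 ≤ Real.cosh R := by
    rw [Real.cosh_eq]; have := (Real.exp_pos (-R)).le; linarith
  nlinarith [e1, e3, e4, sq_nonneg R, sq_nonneg (R - 32)]

lemma derivC18 {f : ℝ → ℝ} (hf : ContDiff ℝ 2 f) (σ k ε A δ : ℝ) (x : ℝ) :
    deriv (deriv (fun s => σ * f s - k - ε * (Real.cosh s * A) + δ * s ^ 2)) x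
      = σ * deriv (deriv f) x - ε * (Real.cosh x * A) + δ * 2 := by
  have hfd : Differentiable ℝ f := hf.differentiable (by norm_num)
  have hf' : ContDiff ℝ 1 (deriv f) := by
    have := contDiff_succ_iff_deriv.mp (show ContDiff ℝ (1 + 1) f from by exact_mod_cast hf)
    exact this.2.2
  have hstep : deriv (fun s => σ * f s - k - ε * (Real.cosh s * A) + δ * s ^ 2)
      = fun t => σ * deriv f t - ε * (Real.sinh t * A) + δ * (2 * t) := by
    funext t
    have h1 : HasDerivAt f (deriv f t) t := (hfd t).hasDerivAt
    have h2 : HasDerivAt (fun s => σ * f s - k - ε * (Real.cosh s * A) + δ * s ^ 2)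
        (σ * deriv f t - ε * (Real.sinh t * A) + δ * (2 * t)) t := by
      have hcs : HasDerivAt (fun s => Real.cosh s * A) (Real.sinh t * A) t :=
        (Real.hasDerivAt_cosh t).mul_const A
      have hp : HasDerivAt (fun s : ℝ => s ^ 2) (2 * t) t := by
        simpa using hasDerivAt_pow 2 t
      exact (((h1.const_mul σ).sub_const k).sub (hcs.const_mul ε)).add (hp.const_mul δ)
    exact h2.deriv
  rw [hstep]
  have h1 : HasDerivAt (deriv f) (deriv (deriv f) x) x :=
    ((hf'.differentiable one_ne_zero) x).hasDerivAt
  have h2 : HasDerivAt (fun t => σ * deriv f t - ε * (Real.sinh t * A) + δ * (2 * t))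
      (σ * deriv (deriv f) x - ε * (Real.cosh x * A) + δ * 2) x := by
    have hs : HasDerivAt (fun t => Real.sinh t * A) (Real.cosh x * A) x :=
      (Real.hasDerivAt_sinh x).mul_const A
    have hl : HasDerivAt (fun t : ℝ => 2 * t) (2 : ℝ) x := by
      simpa using (hasDerivAt_id x).const_mul (2 : ℝ)
    exact ((h1.const_mul σ).sub (hs.const_mul ε)).add (hl.const_mul δ)
  exact h2.deriv

open Filter Topology in
lemma derivC28 {f : ℝ → ℝ} (hf : ContDiffOn ℝ 2 f (Ioo (-1 : ℝ) 1)) (σ ε A B δ : ℝ)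
    {y : ℝ} (hy : y ∈ Ioo (-1 : ℝ) 1) :
    deriv (deriv (fun s => σ * f s - σ * ((1 - s ^ 2) / 2) - ε * (A * Real.cos s) + δ * B)) y
      = σ * deriv (deriv f) y + σ + ε * (A * Real.cos y) := by
  have hfd : DifferentiableOn ℝ f (Ioo (-1 : ℝ) 1) := hf.differentiableOn (by norm_num)
  have hf' : ContDiffOn ℝ 1 (deriv f) (Ioo (-1 : ℝ) 1) :=
    hf.deriv_of_isOpen isOpen_Ioo (by norm_num)
  have hstep : ∀ s ∈ Ioo (-1 : ℝ) 1,
      deriv (fun s => σ * f s - σ * ((1 - s ^ 2) / 2) - ε * (A * Real.cos s) + δ * B) s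
        = σ * deriv f s + σ * s + ε * (A * Real.sin s) := by
    intro s hs
    have h1 : HasDerivAt f (deriv f s) s :=
      (hfd.differentiableAt (isOpen_Ioo.mem_nhds hs)).hasDerivAt
    have hq : HasDerivAt (fun s : ℝ => σ * ((1 - s ^ 2) / 2)) (σ * (-s)) s := by
      have h3 : HasDerivAt (fun s : ℝ => (1 - s ^ 2) / 2) (-s) s := by
        have := ((hasDerivAt_pow 2 s).const_sub 1).div_const 2
        exact this.congr_deriv (by norm_num; ring)
      exact h3.const_mul σ
    have hcs : HasDerivAt (fun s => A * Real.cos s) (A * -Real.sin s) s :=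
      (Real.hasDerivAt_cos s).const_mul A
    have h2 : HasDerivAt (fun s => σ * f s - σ * ((1 - s ^ 2) / 2) - ε * (A * Real.cos s) + δ * B)
        (σ * deriv f s + σ * s + ε * (A * Real.sin s)) s := by
      have := (((h1.const_mul σ).sub hq).sub (hcs.const_mul ε)).add_const (δ * B)
      exact this.congr_deriv (by ring)
    exact h2.deriv
  have hEq : deriv (fun s => σ * f s - σ * ((1 - s ^ 2) / 2) - ε * (A * Real.cos s) + δ * B)
      =ᶠ[𝓝 y] fun s => σ * deriv f s + σ * s + ε * (A * Real.sin s) :=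
    eventuallyEq_of_mem (isOpen_Ioo.mem_nhds hy) hstep
  rw [hEq.deriv_eq]
  have h1 : HasDerivAt (deriv f) (deriv (deriv f) y) y :=
    ((hf'.differentiableOn one_ne_zero).differentiableAt (isOpen_Ioo.mem_nhds hy)).hasDerivAt
  have h2 : HasDerivAt (fun s => σ * deriv f s + σ * s + ε * (A * Real.sin s))
      (σ * deriv (deriv f) y + σ + ε * (A * Real.cos y)) y := by
    have hs : HasDerivAt (fun s => A * Real.sin s) (A * Real.cos y) y :=
      (Real.hasDerivAt_sin y).const_mul A
    have hl : HasDerivAt (fun s : ℝ => σ * s) σ y := by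
      simpa using (hasDerivAt_id y).const_mul σ
    exact ((h1.const_mul σ).add hl).add (hs.const_mul ε)
  exact h2.deriv

lemma sliceU18 {u : ℝ × ℝ → ℝ} (hd : ContDiffOn ℝ 2 u (univ ×ˢ Ioo (-1 : ℝ) 1))
    {y : ℝ} (hy : y ∈ Ioo (-1 : ℝ) 1) : ContDiff ℝ 2 (fun s => u (s, y)) := by
  rw [← contDiffOn_univ]
  exact hd.comp (contDiff_id.prodMk contDiff_const).contDiffOn fun s _ => ⟨mem_univ _, hy⟩

lemma sliceU28 {u : ℝ × ℝ → ℝ} (hd : ContDiffOn ℝ 2 u (univ ×ˢ Ioo (-1 : ℝ) 1))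
    (x : ℝ) : ContDiffOn ℝ 2 (fun s => u (x, s)) (Ioo (-1 : ℝ) 1) :=
  hd.comp (contDiff_const.prodMk contDiff_id).contDiffOn fun _ hs => ⟨mem_univ _, hs⟩

lemma lapG8 {u : ℝ × ℝ → ℝ} (hd : ContDiffOn ℝ 2 u (univ ×ˢ Ioo (-1 : ℝ) 1))
    (σ ε δ : ℝ) {x y : ℝ} (hy : y ∈ Ioo (-1 : ℝ) 1) :
    lap2 (fun p : ℝ × ℝ =>
        σ * u p - σ * ((1 - p.2 ^ 2) / 2) - ε * (Real.cosh p.1 * Real.cos p.2) + δ * p.1 ^ 2)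
      (x, y) = σ * lap2 u (x, y) + σ + 2 * δ := by
  unfold lap2
  simp only
  rw [derivC18 (sliceU18 hd hy) σ (σ * ((1 - y ^ 2) / 2)) ε (Real.cos y) δ x,
      derivC28 (sliceU28 hd x) σ ε (Real.cosh x) (x ^ 2) δ hy]
  ring

set_option maxHeartbeats 2000000 in
/-- Key comparison: the barrier argument. -/
lemma key8 (u : ℝ × ℝ → ℝ)
    (hc : ContinuousOn u (Set.univ ×ˢ Set.Icc (-1:ℝ) 1))
    (hd : ContDiffOn ℝ 2 u (Set.univ ×ˢ Set.Ioo (-1:ℝ) 1))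
    (heq : ∀ p ∈ Set.univ ×ˢ Set.Ioo (-1:ℝ) 1, lap2 u p + 1 = 0)
    (hbc : ∀ x : ℝ, u (x, -1) = 0 ∧ u (x, 1) = 0)
    {C : ℝ} (hC : ∀ p ∈ Set.univ ×ˢ Set.Icc (-1:ℝ) 1, |u p| ≤ C)
    {σ : ℝ} (hσ : σ = 1 ∨ σ = -1) (x₀ y₀ : ℝ) (hy₀ : y₀ ∈ Icc (-1:ℝ) 1)
    {ε : ℝ} (hε : 0 < ε) :
    σ * (u (x₀, y₀) - (1 - y₀ ^ 2) / 2) ≤ ε * Real.cosh x₀ := by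
  have hC0 : 0 ≤ C := le_trans (abs_nonneg _) (hC (0, 0) ⟨mem_univ _, by norm_num⟩)
  have hπ : (3:ℝ) < Real.pi := Real.pi_gt_three
  have hc1 : 0 < Real.cos 1 :=
    Real.cos_pos_of_mem_Ioo ⟨by linarith, by linarith⟩
  set c1 := Real.cos 1 with hc1def
  set δ := ε * c1 / 4 with hδdef
  have hδ0 : 0 < δ := by positivity
  set R := max (|x₀|) (max 32 ((C + 1) / (ε * c1))) with hRdef
  have hR32 : (32:ℝ) ≤ R := le_trans (le_max_left _ _) (le_max_right _ _)
  have hRx : |x₀| ≤ R := le_max_left _ _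
  have hRB : (C + 1) / (ε * c1) ≤ R := le_trans (le_max_right _ _) (le_max_right _ _)
  have hR0 : 0 < R := by linarith
  set G := fun p : ℝ × ℝ =>
      σ * u p - σ * ((1 - p.2 ^ 2) / 2) - ε * (Real.cosh p.1 * Real.cos p.2) + δ * p.1 ^ 2
    with hGdef
  clear_value c1 δ R G
  have hσu : ∀ p, σ * u p ≤ |u p| := by
    intro p
    rcases hσ with rfl | rfl
    · rw [one_mul]; exact le_abs_self _
    · rw [neg_one_mul]; exact neg_le_abs _
  have hmain : ∀ p ∈ Icc (-R) R ×ˢ Icc (-1:ℝ) 1, G p ≤ 0 := by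
    apply lemB8 hR0
    · -- continuity
      have h1 : ContinuousOn u (Icc (-R) R ×ˢ Icc (-1:ℝ) 1) :=
        hc.mono (prod_mono (subset_univ _) subset_rfl)
      have h2 : Continuous fun p : ℝ × ℝ =>
          σ * ((1 - p.2 ^ 2) / 2) + ε * (Real.cosh p.1 * Real.cos p.2) - δ * p.1 ^ 2 := by
        fun_prop
      have h3 : ContinuousOn (fun p : ℝ × ℝ => σ * u p -
          (σ * ((1 - p.2 ^ 2) / 2) + ε * (Real.cosh p.1 * Real.cos p.2) - δ * p.1 ^ 2))
          (Icc (-R) R ×ˢ Icc (-1:ℝ) 1) :=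
        (continuousOn_const.mul h1).sub h2.continuousOn
      refine h3.congr fun p hp => ?_
      simp only [hGdef]; ring
    · intro y hy
      have hU1 := sliceU18 hd hy
      simp only [hGdef]
      exact ((contDiff_const.mul hU1).sub contDiff_const).sub
          (contDiff_const.mul (Real.contDiff_cosh.mul contDiff_const)) |>.add
          (contDiff_const.mul (contDiff_id.pow 2))
    · intro x
      have hU2 := sliceU28 hd x
      simp only [hGdef]
      refine (((contDiffOn_const.mul hU2).sub ?_).sub ?_).add contDiffOn_const
      · exact (contDiff_const.mul ((contDiff_const.sub (contDiff_id.pow 2)).div_const 2)).contDiffOn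
      · exact (contDiff_const.mul (contDiff_const.mul Real.contDiff_cos)).contDiffOn
    · rintro ⟨x, y⟩ hp
      have hy : y ∈ Ioo (-1:ℝ) 1 := hp.2
      have hLG := lapG8 hd σ ε δ (x := x) hy
      have hlap : lap2 u (x, y) = -1 := by
        have := heq (x, y) ⟨mem_univ _, hy⟩; linarith
      rw [hlap] at hLG
      have hfin : lap2 G (x, y) = 2 * δ := by
        rw [hGdef, hLG]; ring
      rw [hfin]; linarith
    · rintro ⟨x, y⟩ ⟨⟨hx, hy⟩, hnot⟩
      simp only [mem_prod, mem_Ioo, not_and_or, not_lt] at hnot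
      simp only [mem_Icc] at hx hy
      have hcoshpos : 0 < Real.cosh x := Real.cosh_pos x
      rcases hnot with hnx | hny
      · -- side boundary |x| = R
        have hcosh : Real.cosh R ≤ Real.cosh x := by
          rw [Real.cosh_le_cosh]
          have : |x| = R := by
            rcases hnx with h | h
            · rw [abs_of_nonpos (show x ≤ 0 by linarith)]; linarith
            · rw [abs_of_nonneg (show 0 ≤ x by linarith)]; linarith
          rw [this, abs_of_nonneg hR0.le]
        have hcosy : c1 ≤ Real.cos y := by
          rw [hc1def, ← Real.cos_abs y]
          apply Real.cos_le_cos_of_nonneg_of_le_pi (abs_nonneg y) (by linarith)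
          rw [abs_le]; exact ⟨hy.1, hy.2⟩
        have hbu : σ * u (x, y) ≤ C := (hσu (x, y)).trans (hC (x, y) ⟨mem_univ _, mem_Icc.mpr hy⟩)
        have hq1 : 0 ≤ (1 - y ^ 2) / 2 := by nlinarith [hy.1, hy.2]
        have hq2 : (1 - y ^ 2) / 2 ≤ 1 / 2 := by nlinarith [sq_nonneg y]
        have hqb : -(σ * ((1 - y ^ 2) / 2)) ≤ 1 / 2 := by
          rcases hσ with rfl | rfl <;> nlinarith
        have hside := cosh_side8 hR32
        have hRB' : C + 1 ≤ R * (ε * c1) := by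
          rw [div_le_iff₀ (by positivity)] at hRB; linarith
        have hcb : 0 ≤ Real.cosh R - (R + R ^ 2 / 4) := by linarith [hside]
        have hcos_bound : ε * (Real.cosh R * c1) ≥ C + 1 + δ * R ^ 2 := by
          rw [hδdef]
          nlinarith [mul_nonneg (mul_pos hε hc1).le hcb, hRB']
        have hcoshx : ε * (Real.cosh x * Real.cos y) ≥ ε * (Real.cosh R * c1) := by
          have h1 : Real.cosh R * c1 ≤ Real.cosh x * Real.cos y := by
            have := Real.cosh_pos R
            nlinarith
          nlinarith [hε, h1]
        have hx2 : x ^ 2 ≤ R ^ 2 := by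
          rw [← sq_abs x]; exact pow_le_pow_left₀ (abs_nonneg x) (abs_le.mpr ⟨hx.1, hx.2⟩) 2
        have hδx : δ * x ^ 2 ≤ δ * R ^ 2 := mul_le_mul_of_nonneg_left hx2 hδ0.le
        simp only [hGdef]
        linarith [hbu, hqb, hcoshx, hcos_bound, hδx]
      · -- top/bottom boundary y = ±1
        have hy1 : y = -1 ∨ y = 1 := by
          rcases hny with h | h
          · left; linarith
          · right; linarith
        have hcq := cosh_quad8 x
        have hqq : 0 ≤ Real.cosh x - x ^ 2 / 4 := by linarith [hcq]
        have hkey : δ * x ^ 2 ≤ ε * (Real.cosh x * c1) := by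
          rw [hδdef]
          nlinarith [mul_nonneg (mul_pos hε hc1).le hqq]
        rcases hy1 with rfl | rfl
        · have hu := (hbc x).1
          simp only [hGdef, hu]
          rw [Real.cos_neg, ← hc1def]
          norm_num
          linarith [hkey]
        · have hu := (hbc x).2
          simp only [hGdef, hu]
          rw [← hc1def]
          norm_num
          linarith [hkey]
  have hx₀ : (x₀, y₀) ∈ Icc (-R) R ×ˢ Icc (-1:ℝ) 1 := by
    constructor
    · rw [mem_Icc]; constructor
      · linarith [neg_abs_le x₀]
      · linarith [le_abs_self x₀]
    · exact hy₀
  have hGx₀ := hmain (x₀, y₀) hx₀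
  simp only [hGdef] at hGx₀
  have hcos1 : Real.cos y₀ ≤ 1 := Real.cos_le_one y₀
  have hcoshpos : 0 < Real.cosh x₀ := Real.cosh_pos x₀
  have t1 : ε * (Real.cosh x₀ * Real.cos y₀) ≤ ε * Real.cosh x₀ := by
    nlinarith [mul_nonneg (mul_nonneg hε.le hcoshpos.le) (sub_nonneg.mpr hcos1)]
  have t2 : 0 ≤ δ * x₀ ^ 2 := by positivity
  nlinarith [hGx₀, t1, t2]

/-- Uniqueness of the one-dimensional torsion profile on the strip: a bounded solution
of `Δu + 1 = 0` on `ℝ × [-1,1]` vanishing on both boundary lines equals `(1-y²)/2`. -/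
theorem stmt8 (u : ℝ × ℝ → ℝ)
    (hc : ContinuousOn u (Set.univ ×ˢ Set.Icc (-1:ℝ) 1))
    (hb : ∃ C : ℝ, ∀ p ∈ Set.univ ×ˢ Set.Icc (-1:ℝ) 1, |u p| ≤ C)
    (hd : ContDiffOn ℝ 2 u (Set.univ ×ˢ Set.Ioo (-1:ℝ) 1))
    (heq : ∀ p ∈ Set.univ ×ˢ Set.Ioo (-1:ℝ) 1, lap2 u p + 1 = 0)
    (hbc : ∀ x : ℝ, u (x, -1) = 0 ∧ u (x, 1) = 0) :
    ∀ p ∈ Set.univ ×ˢ Set.Icc (-1:ℝ) 1, u p = (1 - p.2 ^ 2) / 2 := by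
  obtain ⟨C, hC⟩ := hb
  rintro ⟨x₀, y₀⟩ ⟨-, hy₀⟩
  have hkey : ∀ σ : ℝ, σ = 1 ∨ σ = -1 → σ * (u (x₀, y₀) - (1 - y₀ ^ 2) / 2) ≤ 0 := by
    intro σ hσ
    by_contra h
    push_neg at h
    set A := σ * (u (x₀, y₀) - (1 - y₀ ^ 2) / 2) with hA
    have hcoshpos : 0 < Real.cosh x₀ := Real.cosh_pos x₀
    have hε : 0 < A / (2 * Real.cosh x₀) := by positivity
    have := key8 u hc hd heq hbc hC hσ x₀ y₀ hy₀ hε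
    rw [← hA] at this
    have : A ≤ A / 2 := by
      calc A ≤ A / (2 * Real.cosh x₀) * Real.cosh x₀ := this
        _ = A / 2 := by field_simp
    linarith
  have h1 := hkey 1 (Or.inl rfl)
  have h2 := hkey (-1) (Or.inr rfl)
  simp only [one_mul, neg_one_mul, neg_nonpos] at h1 h2
  have : u (x₀, y₀) - (1 - y₀ ^ 2) / 2 = 0 := le_antisymm h1 (by linarith)
  simp only
  linarith
end

section
/- Let a ≥ 1, let f : ℝ → ℝ be continuous with f(s) = 1 for all s ≥ 2, and let u be continuous on the closure of Ω_a, twice continuously differentiable in Ω_a, with Δu + f(u) = 0 in Ω_a and u = 0 on the boundary of Ω_a. Then u(x,y) < (1−y²)/2 + 2 for every (x,y) ∈ Ω_a. -/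
open Set Metric MeasureTheory Filter Topology Bornology

lemma secondDeriv_nonpos_of_isLocalMax {ψ : ℝ → ℝ} {x : ℝ}
    (h2 : ContDiffAt ℝ 2 ψ x) (hmax : IsLocalMax ψ x) :
    deriv (deriv ψ) x ≤ 0 := by
  by_contra hpos
  push_neg at hpos
  obtain ⟨s, hs, hψs⟩ := h2.contDiffOn (le_refl _) (by norm_num)
  obtain ⟨t, hts, hto, hxt⟩ := _root_.mem_nhds_iff.mp hs
  have hψt : ContDiffOn ℝ 2 ψ t := hψs.mono hts
  have hdd : ContDiffOn ℝ 1 (deriv ψ) t := hψt.deriv_of_isOpen hto (by norm_num)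
  have hdd' : DifferentiableAt ℝ (deriv ψ) x :=
    (hdd.contDiffAt (hto.mem_nhds hxt)).differentiableAt (by norm_num)
  have hder0 : deriv ψ x = 0 := hmax.deriv_eq_zero
  have hslope : Tendsto (slope (deriv ψ) x) (𝓝[≠] x) (𝓝 (deriv (deriv ψ) x)) :=
    hasDerivAt_iff_tendsto_slope.mp hdd'.hasDerivAt
  have hev : ∀ᶠ y in 𝓝[>] x, 0 < slope (deriv ψ) x y :=
    (hslope.mono_left (nhdsWithin_mono x (fun y hy => ne_of_gt hy))).eventually
      (eventually_gt_nhds hpos)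
  have hevmax : ∀ᶠ y in 𝓝[>] x, ψ y ≤ ψ x := (hmax.filter_mono nhdsWithin_le_nhds)
  have hevt : ∀ᶠ y in 𝓝[>] x, y ∈ t := eventually_nhdsWithin_of_eventually_nhds
    (hto.eventually_mem hxt)
  obtain ⟨b, hb, hIoo⟩ := mem_nhdsGT_iff_exists_Ioo_subset.mp
    (hev.and (hevmax.and hevt))
  rw [mem_Ioi] at hb
  set c := (x + b)/2 with hc
  have hxc : x < c := by simp only [hc]; linarith
  have hcb : c < b := by simp only [hc]; linarith
  have hsub : Icc x c ⊆ t := by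
    intro y hy
    rcases eq_or_lt_of_le hy.1 with h | h
    · exact h ▸ hxt
    · exact (hIoo ⟨h, lt_of_le_of_lt hy.2 hcb⟩).2.2
  have hmono : StrictMonoOn ψ (Icc x c) := by
    apply strictMonoOn_of_deriv_pos (convex_Icc x c) (hψt.continuousOn.mono hsub)
    intro y hy
    rw [interior_Icc] at hy
    have hy' := (hIoo ⟨hy.1, lt_trans hy.2 hcb⟩).1
    rw [slope_def_field, hder0, sub_zero] at hy'
    have hyx : 0 < y - x := by linarith [hy.1]
    have := mul_pos hy' hyx
    rwa [div_mul_cancel₀ _ (ne_of_gt hyx)] at this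
  have hlt : ψ x < ψ c :=
    hmono (left_mem_Icc.mpr hxc.le) (right_mem_Icc.mpr hxc.le) hxc
  have : ψ c ≤ ψ x := (hIoo ⟨hxc, hcb⟩).2.1
  linarith

lemma maxPrin (v : ℝ × ℝ → ℝ) (W : Set (ℝ × ℝ)) (hWo : IsOpen W)
    (hWb : IsBounded W) (hWne : W.Nonempty)
    (hvc : ContinuousOn v (closure W))
    (hv2 : ∀ p ∈ W, ContDiffAt ℝ 2 v p)
    (hlap : ∀ p ∈ W, 0 < lap2 v p) :
    ∃ q ∈ closure W \ W, ∀ p ∈ closure W, v p ≤ v q := by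
  have hcpt : IsCompact (closure W) := hWb.isCompact_closure
  obtain ⟨q, hq, hqmax⟩ := hcpt.exists_isMaxOn hWne.closure hvc
  obtain ⟨q1, q2⟩ := q
  refine ⟨(q1, q2), ⟨hq, ?_⟩, fun p hp => hqmax hp⟩
  intro hqW
  have hloc : IsLocalMax v (q1, q2) := by
    filter_upwards [mem_nhds_iff.mpr ⟨W, subset_closure, hWo, hqW⟩] with p hp
    exact hqmax hp
  have hx : IsLocalMax (fun s => v (s, q2)) q1 := by
    have ht : Tendsto (fun s => ((s : ℝ), q2)) (𝓝 q1) (𝓝 (q1, q2)) :=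
      (continuous_id.prodMk continuous_const).tendsto q1
    exact ht.eventually hloc
  have hy : IsLocalMax (fun t => v (q1, t)) q2 := by
    have ht : Tendsto (fun t => (q1, (t : ℝ))) (𝓝 q2) (𝓝 (q1, q2)) :=
      (continuous_const.prodMk continuous_id).tendsto q2
    exact ht.eventually hloc
  have hcx : ContDiffAt ℝ 2 (fun s => v (s, q2)) q1 :=
    (hv2 _ hqW).comp q1 ((contDiff_id.prodMk contDiff_const).contDiffAt)
  have hcy : ContDiffAt ℝ 2 (fun t => v (q1, t)) q2 :=
    (hv2 _ hqW).comp q2 ((contDiff_const.prodMk contDiff_id).contDiffAt)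
  have h1 := secondDeriv_nonpos_of_isLocalMax hcx hx
  have h2 := secondDeriv_nonpos_of_isLocalMax hcy hy
  have hl := hlap _ hqW
  unfold lap2 at hl
  simp only at hl h1 h2
  linarith

lemma secondDeriv_add {g Q : ℝ → ℝ} {A : Set ℝ} (hg : ContDiffOn ℝ 2 g A) (hA : IsOpen A)
    {x : ℝ} (hx : x ∈ A) (hQ : Differentiable ℝ Q) (hQ' : DifferentiableAt ℝ (deriv Q) x) :
    deriv (deriv (fun s => g s + Q s)) x = deriv (deriv g) x + deriv (deriv Q) x := by
  have hev : (fun s => deriv (fun s' => g s' + Q s') s) =ᶠ[𝓝 x]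
      (fun s => deriv g s + deriv Q s) := by
    filter_upwards [hA.mem_nhds hx] with s hs
    exact deriv_add ((hg.contDiffAt (hA.mem_nhds hs)).differentiableAt (by norm_num)) (hQ s)
  rw [Filter.EventuallyEq.deriv_eq hev]
  exact deriv_add
    (((hg.deriv_of_isOpen (m := 1) hA (by norm_num)).contDiffAt (hA.mem_nhds hx)).differentiableAt
      (by norm_num)) hQ'

theorem stmt11 (φ : ℝ → ℝ)
    (hφc : ContinuousOn φ (Set.Icc (-1) 1)) (hφ0 : ∀ y ∈ Set.Icc (-1:ℝ) 1, 0 ≤ φ y)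
    (hφcc : ConcaveOn ℝ (Set.Icc (-1:ℝ) 1) φ) (hφe : ∀ y : ℝ, φ (-y) = φ y)
    (hφm1 : φ (-1) = 0) (hφ1 : φ 1 = 0)
    (a : ℝ) (ha : 1 ≤ a) (f : ℝ → ℝ) (hfc : Continuous f)
    (hf1 : ∀ s : ℝ, 2 ≤ s → f s = 1)
    (u : ℝ × ℝ → ℝ)
    (hc : ContinuousOn u (closure (stadium φ a)))
    (hd : ContDiffOn ℝ 2 u (stadium φ a))
    (heq : ∀ p ∈ stadium φ a, lap2 u p + f (u p) = 0)
    (hbc : ∀ p ∈ frontier (stadium φ a), u p = 0) :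
    ∀ p ∈ stadium φ a, u p < (1 - p.2 ^ 2) / 2 + 2 := by
  set Ω := stadium φ a with hΩdef
  -- Ω is open
  have hΩo : IsOpen Ω := by
    rw [isOpen_iff_mem_nhds]
    rintro p ⟨h1, h2, h3, h4⟩
    have hφy : ContinuousAt φ p.2 :=
      hφc.continuousAt (Icc_mem_nhds (by linarith) (by linarith))
    have c1 : ContinuousAt (fun q : ℝ × ℝ => q.1 + (a + φ q.2)) p :=
      continuousAt_fst.add (continuousAt_const.add (hφy.comp continuousAt_snd))
    have c2 : ContinuousAt (fun q : ℝ × ℝ => (a + φ q.2) - q.1) p :=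
      (continuousAt_const.add (hφy.comp continuousAt_snd)).sub continuousAt_fst
    have m1 : (fun q : ℝ × ℝ => q.1 + (a + φ q.2)) ⁻¹' (Ioi 0) ∈ 𝓝 p :=
      c1 (Ioi_mem_nhds (by simp only; linarith))
    have m2 : (fun q : ℝ × ℝ => (a + φ q.2) - q.1) ⁻¹' (Ioi 0) ∈ 𝓝 p :=
      c2 (Ioi_mem_nhds (by simp only; linarith))
    have m3 : (Prod.snd : ℝ × ℝ → ℝ) ⁻¹' (Ioo (-1) 1) ∈ 𝓝 p :=
      continuousAt_snd (Ioo_mem_nhds h3 h4)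
    filter_upwards [m1, m2, m3] with q hq1 hq2 hq3
    simp only [mem_preimage, mem_Ioi, mem_Ioo] at hq1 hq2 hq3
    exact ⟨by linarith, by linarith, hq3.1, hq3.2⟩
  -- bound for φ
  obtain ⟨C, hC⟩ := isCompact_Icc.exists_bound_of_continuousOn hφc
  have hsubΩ : Ω ⊆ Icc (-(a + C)) (a + C) ×ˢ Icc (-1 : ℝ) 1 := by
    rintro p ⟨h1, h2, h3, h4⟩
    have hpy : p.2 ∈ Icc (-1 : ℝ) 1 := ⟨h3.le, h4.le⟩
    have := hC p.2 hpy
    rw [Real.norm_eq_abs, abs_le] at this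
    exact ⟨⟨by linarith, by linarith⟩, hpy⟩
  have hΩb : IsBounded Ω :=
    ((isBounded_Icc _ _).prod (isBounded_Icc _ _)).subset hsubΩ
  have hclΩ : closure Ω ⊆ Icc (-(a + C)) (a + C) ×ˢ Icc (-1 : ℝ) 1 :=
    closure_minimal hsubΩ ((isClosed_Icc).prod isClosed_Icc)
  -- u is continuous at points of Ω
  have hu_at : ∀ q ∈ Ω, ContinuousAt u q := fun q hq =>
    hc.continuousAt (mem_nhds_iff.mpr ⟨Ω, subset_closure, hΩo, hq⟩)
  set w : ℝ × ℝ → ℝ := fun q => u q - (1 - q.2 ^ 2) / 2 with hwdef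
  have hwc : ContinuousOn w (closure Ω) :=
    hc.sub (((continuous_const.sub (continuous_snd.pow 2)).div_const 2).continuousOn)
  intro p hp
  have hpy2 : p.2 ^ 2 < 1 := by
    obtain ⟨-, -, h3, h4⟩ := hp
    nlinarith
  rcases le_or_gt (u p) 2 with hup | hup
  · linarith
  -- the set W where u > 2
  set W : Set (ℝ × ℝ) := Ω ∩ {q | 2 < u q} with hWdef
  have hWΩ : W ⊆ Ω := inter_subset_left
  have hWo : IsOpen W := by
    rw [isOpen_iff_mem_nhds]
    rintro q ⟨hqΩ, hqu⟩
    filter_upwards [hΩo.mem_nhds hqΩ, hu_at q hqΩ (Ioi_mem_nhds hqu)] with r hr1 hr2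
    exact ⟨hr1, hr2⟩
  have hWne : W.Nonempty := ⟨p, hp, hup⟩
  have hWb : IsBounded W := hΩb.subset hWΩ
  have hclWΩ : closure W ⊆ closure Ω := closure_mono hWΩ
  have hucl : ContinuousOn u (closure W) := hc.mono hclWΩ
  have hwcl : ContinuousOn w (closure W) := hwc.mono hclWΩ
  -- the compact "boundary" set S
  set S := closure W \ W with hSdef
  have hScl : IsClosed S := (isClosed_closure).sdiff hWo
  have hScpt : IsCompact S :=
    hWb.isCompact_closure.of_isClosed_subset hScl diff_subset
  have hSne : S.Nonempty := by
    by_contra hS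
    rw [not_nonempty_iff_eq_empty, diff_eq_empty] at hS
    have hWcl : IsClosed W := closure_subset_iff_isClosed.mp hS
    rcases isClopen_iff.mp ⟨hWcl, hWo⟩ with h | h
    · exact hWne.ne_empty h
    · have hmem : ((a + C + 1 : ℝ), (0 : ℝ)) ∈ W := h ▸ mem_univ _
      have := (hsubΩ (hWΩ hmem)).1.2
      simp only at this
      linarith
  obtain ⟨s0, hs0S, hs0max⟩ := hScpt.exists_isMaxOn hSne (hwcl.mono diff_subset)
  -- the maximum of w on S is < 2
  have hm2 : w s0 < 2 := by
    have hs0cl : s0 ∈ closure W := hs0S.1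
    by_cases hs0Ω : s0 ∈ Ω
    · have hs0u : u s0 ≤ 2 := by
        by_contra h
        exact hs0S.2 ⟨hs0Ω, by push_neg at h; exact h⟩
      have : s0.2 ^ 2 < 1 := by
        obtain ⟨-, -, h3, h4⟩ := hs0Ω
        nlinarith
      simp only [hwdef]
      linarith
    · have hfr : s0 ∈ frontier Ω := by
        rw [hΩo.frontier_eq]
        exact ⟨hclWΩ hs0cl, hs0Ω⟩
      have hu0 : u s0 = 0 := hbc _ hfr
      have hy2 : s0.2 ^ 2 ≤ 1 := by
        have := (hclΩ (hclWΩ hs0cl)).2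
        simp only [mem_Icc] at this
        nlinarith [this.1, this.2]
      simp only [hwdef, hu0]
      linarith
  -- exponential bound
  set E := Real.exp (a + C) with hEdef
  have hE : ∀ q ∈ closure W, Real.exp q.1 ≤ E := by
    intro q hq
    have := (hclΩ (hclWΩ hq)).1
    simp only [mem_Icc] at this
    exact Real.exp_le_exp.mpr this.2
  have hEpos : 0 < E := Real.exp_pos _
  -- the key estimate, for every ε > 0
  have hkey : ∀ ε > 0, w p ≤ w s0 + ε * E := by
    intro ε hε
    set v : ℝ × ℝ → ℝ := fun q => w q + ε * Real.exp q.1 with hvdef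
    have hvc : ContinuousOn v (closure W) :=
      hwcl.add ((continuous_const.mul (Real.continuous_exp.comp continuous_fst)).continuousOn)
    have hv2 : ∀ q ∈ W, ContDiffAt ℝ 2 v q := by
      intro q hq
      have hu2 : ContDiffAt ℝ 2 u q := hd.contDiffAt (hΩo.mem_nhds (hWΩ hq))
      have c3 : ContDiff ℝ 2 (fun q : ℝ × ℝ => (1 - q.2 ^ 2) / 2) :=
        (contDiff_const.sub (contDiff_snd.pow 2)).div_const 2
      have c4 : ContDiff ℝ 2 (fun q : ℝ × ℝ => ε * Real.exp q.1) :=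
        contDiff_const.mul (Real.contDiff_exp.comp contDiff_fst)
      exact (hu2.sub c3.contDiffAt).add c4.contDiffAt
    have hlap : ∀ q ∈ W, 0 < lap2 v q := by
      rintro q hq
      obtain ⟨q1, q2⟩ := q
      have hqW : (q1, q2) ∈ W := hq
      -- x slice
      have hA : IsOpen {s : ℝ | (s, q2) ∈ W} :=
        hWo.preimage (continuous_id.prodMk continuous_const)
      have hq1A : q1 ∈ {s : ℝ | (s, q2) ∈ W} := hqW
      have hgA : ContDiffOn ℝ 2 (fun s => u (s, q2)) {s : ℝ | (s, q2) ∈ W} :=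
        (hd.mono hWΩ).comp ((contDiff_id.prodMk contDiff_const).contDiffOn) (fun s hs => hs)
      have hQdiff : Differentiable ℝ (fun s : ℝ => ε * Real.exp s - (1 - q2 ^ 2) / 2) :=
        (Real.differentiable_exp.const_mul ε).sub_const _
      have hQderiv : deriv (fun s : ℝ => ε * Real.exp s - (1 - q2 ^ 2) / 2)
          = fun s => ε * Real.exp s := by
        funext s
        exact (((Real.hasDerivAt_exp s).const_mul ε).sub_const _).deriv
      have hxslice : (fun s => v (s, q2)) =
          fun s => u (s, q2) + (ε * Real.exp s - (1 - q2 ^ 2) / 2) := by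
        funext s
        simp only [hvdef, hwdef]
        ring
      have hxval : deriv (deriv (fun s => v (s, q2))) q1
          = deriv (deriv (fun s => u (s, q2))) q1 + ε * Real.exp q1 := by
        rw [hxslice, secondDeriv_add hgA hA hq1A hQdiff (by
          rw [hQderiv]; exact (Real.differentiable_exp.const_mul ε).differentiableAt)]
        congr 1
        rw [hQderiv]
        exact ((Real.hasDerivAt_exp q1).const_mul ε).deriv
      -- y slice
      have hB : IsOpen {t : ℝ | (q1, t) ∈ W} :=
        hWo.preimage (continuous_const.prodMk continuous_id)
      have hq2B : q2 ∈ {t : ℝ | (q1, t) ∈ W} := hqW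
      have hgB : ContDiffOn ℝ 2 (fun t => u (q1, t)) {t : ℝ | (q1, t) ∈ W} :=
        (hd.mono hWΩ).comp ((contDiff_const.prodMk contDiff_id).contDiffOn) (fun t ht => ht)
      have hQ2diff : Differentiable ℝ
          (fun t : ℝ => t ^ 2 / 2 + (ε * Real.exp q1 - 1 / 2)) :=
        ((differentiable_pow 2).div_const 2).add_const _
      have hQ2deriv : deriv (fun t : ℝ => t ^ 2 / 2 + (ε * Real.exp q1 - 1 / 2))
          = fun t => t := by
        funext t
        have := (((hasDerivAt_pow 2 t).div_const 2).add_const (ε * Real.exp q1 - 1 / 2)).deriv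
        simpa using this
      have hyslice : (fun t => v (q1, t)) =
          fun t => u (q1, t) + (t ^ 2 / 2 + (ε * Real.exp q1 - 1 / 2)) := by
        funext t
        simp only [hvdef, hwdef]
        ring
      have hyval : deriv (deriv (fun t => v (q1, t))) q2
          = deriv (deriv (fun t => u (q1, t))) q2 + 1 := by
        rw [hyslice, secondDeriv_add hgB hB hq2B hQ2diff (by
          rw [hQ2deriv]; exact differentiable_id.differentiableAt)]
        congr 1
        rw [hQ2deriv]
        exact deriv_id q2
      -- conclude
      have hlapu : lap2 u (q1, q2) = -1 := by
        have h1 := heq _ (hWΩ hqW)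
        have h2 : f (u (q1, q2)) = 1 := hf1 _ (le_of_lt hqW.2)
        rw [h2] at h1
        linarith
      have : lap2 v (q1, q2) = ε * Real.exp q1 := by
        unfold lap2
        simp only
        unfold lap2 at hlapu
        simp only at hlapu
        rw [hxval, hyval]
        linarith
      rw [this]
      positivity
    obtain ⟨q, hqS, hqmax⟩ := maxPrin v W hWo hWb hWne hvc hv2 hlap
    have h1 : v p ≤ v q := hqmax p (subset_closure ⟨hp, hup⟩)
    have h2 : w q ≤ w s0 := hs0max hqS
    have h3 : Real.exp q.1 ≤ E := hE q hqS.1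
    have h4 : 0 < Real.exp p.1 := Real.exp_pos _
    simp only [hvdef] at h1
    nlinarith
  -- take ε → 0
  have hfin : w p ≤ w s0 := by
    apply le_of_forall_pos_le_add
    intro ε hε
    have := hkey (ε / E) (div_pos hε hEpos)
    rwa [div_mul_cancel₀ _ (ne_of_gt hEpos)] at this
  simp only [hwdef] at hfin hm2
  linarith
end
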